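/- arXiv:2204.05480 — 9 statements merged into one kernel-verified Lean document; each statement's English description precedes it below -/
import Mathlib

section
/- The function φ(x) = cosh(x)/sinh(x) − 1/x defined on (0,∞) is strictly increasing. -/
/-- The function φ(x) = cosh(x)/sinh(x) − 1/x is strictly increasing on (0, ∞). -/
theorem phi_strictMonoOn :
    StrictMonoOn (fun x : ℝ => Real.cosh x / Real.sinh x - 1 / x) (Set.Ioi (0 : ℝ)) := by
  have hder : ∀ x : ℝ, 0 < x → HasDerivAt (fun x : ℝ => Real.cosh x / Real.sinh x - 1 / x)
      (1 / x ^ 2 - 1 / Real.sinh x ^ 2) x := by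
    intro x hx
    have hs : 0 < Real.sinh x := Real.sinh_pos_iff.mpr hx
    have h1 : HasDerivAt (fun x : ℝ => Real.cosh x / Real.sinh x)
        ((Real.sinh x * Real.sinh x - Real.cosh x * Real.cosh x) / Real.sinh x ^ 2) x :=
      (Real.hasDerivAt_cosh x).div (Real.hasDerivAt_sinh x) hs.ne'
    have h2 : HasDerivAt (fun x : ℝ => 1 / x) (-(x ^ 2)⁻¹) x := by
      simpa only [one_div] using hasDerivAt_inv hx.ne'
    have := h1.sub h2
    convert this using 1
    case e'_4 => rfl
    case e'_5 => rfl
    case e'_8 => rfl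
    have hc : Real.cosh x ^ 2 - Real.sinh x ^ 2 = 1 := Real.cosh_sq_sub_sinh_sq x
    have hm : Real.sinh x * Real.sinh x - Real.cosh x * Real.cosh x = -1 := by nlinarith [hc]
    rw [hm]
    field_simp
    ring
  apply strictMonoOn_of_deriv_pos (convex_Ioi 0)
  · exact fun x hx => ((hder x hx).continuousAt).continuousWithinAt
  · intro x hx
    rw [interior_Ioi] at hx
    have hx0 : (0:ℝ) < x := hx
    rw [(hder x hx0).deriv]
    have hxs : x < Real.sinh x := Real.self_lt_sinh_iff.mpr hx0
    have h1 : 0 < x ^ 2 := by positivity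
    have h2 : x ^ 2 < Real.sinh x ^ 2 := by nlinarith [hx0, hxs]
    have : 1 / Real.sinh x ^ 2 < 1 / x ^ 2 := by
      apply one_div_lt_one_div_of_lt h1 h2
    linarith
end

section
/- The function φ(x) = cosh(x)/sinh(x) − 1/x is strictly concave on (0,∞), i.e., φ''(x) < 0 for all x > 0. -/
open Real Nat

private lemma exp_tsum' (y : ℝ) : Real.exp y = ∑' n : ℕ, y ^ n / n ! := by
  rw [Real.exp_eq_exp_ℝ, NormedSpace.exp_eq_tsum_div]

private lemma coeff_ineq (m : ℕ) :
    (4 * (2*(m:ℝ)+1) * (2*(m:ℝ)+2) * (2*(m:ℝ)+3) + 3) ≤ 27 * 9 ^ m := by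
  induction m with
  | zero => norm_num
  | succ m ih =>
    have hm : (0:ℝ) ≤ (m:ℝ) := Nat.cast_nonneg m
    have h9 : (27:ℝ) * 9 ^ (m+1) = 9 * (27 * 9 ^ m) := by ring
    have hmul : 9 * (4 * (2*(m:ℝ)+1) * (2*(m:ℝ)+2) * (2*(m:ℝ)+3) + 3) ≤ 9 * (27 * 9 ^ m) := by
      linarith
    push_cast
    rw [h9]
    nlinarith [hmul, hm, mul_nonneg (mul_nonneg hm hm) hm, sq_nonneg ((m:ℝ))]

private lemma key_ineq (x : ℝ) (hx : 0 < x) : x ^ 3 * Real.cosh x < Real.sinh x ^ 3 := by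
  have h1 : Summable fun n : ℕ => (3*x) ^ n / (n ! : ℝ) := Real.summable_pow_div_factorial _
  have h2 : Summable fun n : ℕ => (-(3*x)) ^ n / (n ! : ℝ) := Real.summable_pow_div_factorial _
  have h3 : Summable fun n : ℕ => x ^ n / (n ! : ℝ) := Real.summable_pow_div_factorial _
  have h4 : Summable fun n : ℕ => (-x) ^ n / (n ! : ℝ) := Real.summable_pow_div_factorial _
  set F : ℕ → ℝ := fun n => ((3*x)^n / (n ! : ℝ))/2 - ((-(3*x))^n / (n ! : ℝ))/2
      - 3/2 * (x^n / (n ! : ℝ)) + 3/2 * ((-x)^n / (n ! : ℝ)) with hF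
  set G : ℕ → ℝ := fun n => 2*x^3*(x^n / (n ! : ℝ)) + 2*x^3*((-x)^n / (n ! : ℝ)) with hG
  have hFs : Summable F :=
    (((h1.div_const 2).sub (h2.div_const 2)).sub (h3.mul_left (3/2))).add (h4.mul_left (3/2))
  have hGs : Summable G := (h3.mul_left _).add (h4.mul_left _)
  have hFv : ∑' n, F n = Real.sinh (3*x) - 3 * Real.sinh x := by
    rw [hF]
    rw [Summable.tsum_add (((h1.div_const 2).sub (h2.div_const 2)).sub (h3.mul_left (3/2)))
        (h4.mul_left (3/2)),
      Summable.tsum_sub ((h1.div_const 2).sub (h2.div_const 2)) (h3.mul_left (3/2)),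
      Summable.tsum_sub (h1.div_const 2) (h2.div_const 2),
      tsum_div_const, tsum_div_const, tsum_mul_left, tsum_mul_left,
      ← exp_tsum', ← exp_tsum', ← exp_tsum', ← exp_tsum',
      Real.sinh_eq, Real.sinh_eq]
    ring
  have hGv : ∑' n, G n = 4 * (x^3 * Real.cosh x) := by
    rw [hG, Summable.tsum_add (h3.mul_left _) (h4.mul_left _), tsum_mul_left, tsum_mul_left,
      ← exp_tsum', ← exp_tsum', Real.cosh_eq]
    ring
  have hfacpos : ∀ n : ℕ, (0:ℝ) < (n ! : ℝ) := fun n => by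
    exact_mod_cast Nat.cast_pos.2 n.factorial_pos
  have h0 : ∀ n, 0 ≤ G n := by
    intro n
    rcases Nat.even_or_odd n with he | ho
    · rw [hG]
      simp only [he.neg_pow]
      have := (hfacpos n)
      positivity
    · rw [hG]
      simp only [ho.neg_pow]
      have : 2*x^3*(x^n / (n ! : ℝ)) + 2*x^3*(-x^n / (n ! : ℝ)) = 0 := by ring
      linarith [this.ge]
  have hcmp : ∀ n, G n ≤ F (n+3) := by
    intro n
    rcases Nat.even_or_odd n with he | ho
    · -- n even, n+3 odd
      obtain ⟨m, rfl⟩ := he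
      have hodd : Odd (m + m + 3) := ⟨m + 1, by ring⟩
      have hkey : (4:ℝ) * (((m:ℝ)+m+1)*((m:ℝ)+m+2)*((m:ℝ)+m+3)) ≤ 3 ^ (m+m+3) - 3 := by
        have h' := coeff_ineq m
        have h9 : (3:ℝ) ^ (m+m+3) = 27 * 9 ^ m := by
          rw [show m + m + 3 = 2*m + 3 by ring, pow_add, pow_mul]
          norm_num [mul_comm]
        rw [h9]
        nlinarith [h']
      simp only [hG, hF, Even.neg_pow (⟨m, rfl⟩ : Even (m+m)), Odd.neg_pow hodd]
      have hfac : ((m+m+3)! : ℝ) = ((m:ℝ)+m+3) * ((m:ℝ)+m+2) * ((m:ℝ)+m+1) * ((m+m)! : ℝ) := by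
        have hnat : (m+m+3)! = (m+m+3) * ((m+m+2) * ((m+m+1) * (m+m)!)) := by
          simp [Nat.factorial_succ]
        rw [hnat]
        push_cast
        ring
      have e1 : 2 * x ^ 3 * (x ^ (m + m) / ((m + m)! : ℝ)) + 2 * x ^ 3 * (x ^ (m + m) / ((m + m)! : ℝ))
          = 4 * x ^ (m+m+3) / ((m + m)! : ℝ) := by
        rw [pow_add]
        field_simp
        ring
      have e2 : (3 * x) ^ (m+m+3) / ((m+m+3)! : ℝ) / 2 - -(3 * x) ^ (m+m+3) / ((m+m+3)! : ℝ) / 2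
            - 3 / 2 * (x ^ (m+m+3) / ((m+m+3)! : ℝ)) + 3 / 2 * (-x ^ (m+m+3) / ((m+m+3)! : ℝ))
          = ((3:ℝ) ^ (m+m+3) - 3) * x ^ (m+m+3) / ((m+m+3)! : ℝ) := by
        rw [mul_pow]
        field_simp
        ring
      rw [e1, e2]
      rw [div_le_div_iff₀ (hfacpos (m+m)) (hfacpos (m+m+3)), hfac]
      have hxp : (0:ℝ) < x ^ (m+m+3) := pow_pos hx _
      have hfp := hfacpos (m+m)
      nlinarith [mul_le_mul_of_nonneg_right hkey (le_of_lt (mul_pos hxp hfp))]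
    · -- n odd, n+3 even
      obtain ⟨m, rfl⟩ := ho
      have heven : Even (2*m+1+3) := ⟨m+2, by ring⟩
      simp only [hG, hF]
      simp only [(Odd.neg_pow ⟨m, by ring⟩ x : (-x)^(2*m+1) = -x^(2*m+1)),
        heven.neg_pow]
      exact le_of_eq (by ring)
  have hstrict : G 4 < F 7 := by
    simp only [hG, hF]
    have hx7 : 0 < x ^ 7 := pow_pos hx 7
    have e1 : ((-x):ℝ)^4 = x^4 := by ring
    have e2 : ((-x):ℝ)^7 = -x^7 := by ring
    have e3 : ((-(3*x)):ℝ)^7 = -((3*x)^7) := by ring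
    rw [e1, e2, e3, mul_pow]
    norm_num [Nat.factorial]
    nlinarith [hx7]
  have hFs3 : Summable (fun n => F (n+3)) := (summable_nat_add_iff 3).2 hFs
  have hlt : ∑' n, G n < ∑' n, F (n+3) :=
    Summable.tsum_lt_tsum_of_nonneg h0 hcmp hstrict hFs3
  have hshift : ∑' n, F n = ∑' n, F (n+3) := by
    have hsum := Summable.sum_add_tsum_nat_add 3 hFs
    have hz : ∑ i ∈ Finset.range 3, F i = 0 := by
      rw [hF]
      simp [Finset.sum_range_succ]
      ring
    linarith [hsum, hz.ge, hz.le]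
  have big : 4 * (x^3 * Real.cosh x) < Real.sinh (3*x) - 3 * Real.sinh x := by
    rw [← hGv, ← hFv, hshift]; exact hlt
  have hid : Real.sinh (3*x) - 3 * Real.sinh x = 4 * Real.sinh x ^ 3 := by
    have e1 : Real.exp (3*x) = (Real.exp x)^3 := by
      rw [show (3:ℝ)*x = ((3:ℕ):ℝ)*x by norm_num, Real.exp_nat_mul]
    have e2 : Real.exp (-(3*x)) = (Real.exp (-x))^3 := by
      rw [show -((3:ℝ)*x) = ((3:ℕ):ℝ)*(-x) by push_cast; ring, Real.exp_nat_mul]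
    rw [Real.sinh_eq, Real.sinh_eq, e1, e2, Real.exp_neg]
    have hne : Real.exp x ≠ 0 := (Real.exp_pos x).ne'
    field_simp
    ring
  linarith [big, hid.ge, hid.le]

/-- The function φ(x) = cosh(x)/sinh(x) − 1/x is strictly concave on (0,∞):
its second derivative is negative for all x > 0. -/
theorem phi_second_deriv_neg :
    ∀ x : ℝ, 0 < x →
      deriv (deriv (fun x : ℝ => Real.cosh x / Real.sinh x - 1 / x)) x < 0 := by
  intro x hx
  have hsx : 0 < Real.sinh x := Real.sinh_pos_iff.2 hx
  have hderiv1 : ∀ y ∈ Set.Ioi (0:ℝ),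
      deriv (fun z : ℝ => Real.cosh z / Real.sinh z - 1 / z) y
        = (y^2)⁻¹ - (Real.sinh y ^ 2)⁻¹ := by
    intro y hy
    have hy0 : 0 < y := hy
    have hsy : 0 < Real.sinh y := Real.sinh_pos_iff.2 hy0
    have h1 : HasDerivAt (fun z : ℝ => Real.cosh z / Real.sinh z)
        ((Real.sinh y * Real.sinh y - Real.cosh y * Real.cosh y) / Real.sinh y ^ 2) y :=
      (Real.hasDerivAt_cosh y).div (Real.hasDerivAt_sinh y) hsy.ne'
    have h2 : HasDerivAt (fun z : ℝ => 1 / z) (-(y^2)⁻¹) y := by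
      simpa only [one_div] using hasDerivAt_inv hy0.ne'
    rw [HasDerivAt.deriv (f := fun z : ℝ => Real.cosh z / Real.sinh z - 1 / z) (h1.sub h2)]
    have hcs : Real.sinh y * Real.sinh y - Real.cosh y * Real.cosh y = -1 := by
      linear_combination - Real.cosh_sq_sub_sinh_sq y
    rw [hcs]
    field_simp
    ring
  have hev : deriv (fun z : ℝ => Real.cosh z / Real.sinh z - 1 / z)
      =ᶠ[nhds x] fun y => (y^2)⁻¹ - (Real.sinh y ^ 2)⁻¹ :=
    Filter.eventuallyEq_of_mem (Ioi_mem_nhds hx) hderiv1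
  rw [hev.deriv_eq]
  have hp : HasDerivAt (fun y : ℝ => y^2) (2*x) x := by
    simpa using hasDerivAt_pow 2 x
  have hq : HasDerivAt (fun y : ℝ => Real.sinh y ^ 2) (2 * Real.sinh x * Real.cosh x) x := by
    simpa using (Real.hasDerivAt_sinh x).fun_pow 2
  have hp' : HasDerivAt (fun y : ℝ => (y^2)⁻¹) (-(2*x)/(x^2)^2) x :=
    hp.inv (by positivity)
  have hq' : HasDerivAt (fun y : ℝ => (Real.sinh y ^ 2)⁻¹)
      (-(2 * Real.sinh x * Real.cosh x)/(Real.sinh x ^ 2)^2) x :=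
    hq.inv (by positivity)
  rw [HasDerivAt.deriv (f := fun y : ℝ => (y^2)⁻¹ - (Real.sinh y ^ 2)⁻¹) (hp'.sub hq')]
  have key := key_ineq x hx
  have hA : -(2*x)/(x^2)^2 = -(2/x^3) := by
    field_simp
  have hB : -(2 * Real.sinh x * Real.cosh x)/(Real.sinh x ^ 2)^2
      = -(2 * Real.cosh x / Real.sinh x ^ 3) := by
    field_simp
  rw [hA, hB]
  have hlt : 2 * Real.cosh x / Real.sinh x ^ 3 < 2 / x^3 := by
    rw [div_lt_div_iff₀ (by positivity) (by positivity)]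
    nlinarith [key]
  linarith
end

section
/- For all x > 0, sinh(x)³ > x³ · cosh(x). -/
open Real

lemma aux_cosh_ge (x : ℝ) (hx : 0 ≤ x) : 1 + x ^ 2 / 2 ≤ Real.cosh x := by
  have h : ∀ y ∈ Set.Ici (0:ℝ), ∀ z ∈ Set.Ici (0:ℝ), y ≤ z →
      (fun t : ℝ => Real.cosh t - (1 + t ^ 2 / 2)) y ≤
      (fun t : ℝ => Real.cosh t - (1 + t ^ 2 / 2)) z := by
    apply monotoneOn_of_deriv_nonneg (convex_Ici 0)
    · fun_prop
    · intro t _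
      exact (Real.differentiable_cosh.sub (by fun_prop)).differentiableAt.differentiableWithinAt
    · intro t ht
      rw [interior_Ici, Set.mem_Ioi] at ht
      have hd : HasDerivAt (fun t : ℝ => Real.cosh t - (1 + t ^ 2 / 2))
          (Real.sinh t - t) t := by
        have := ((Real.hasDerivAt_cosh t).sub
          ((hasDerivAt_id t).pow 2 |>.div_const 2 |>.const_add 1))
        exact this.congr_deriv (by simp only [id_eq]; ring)
      rw [hd.deriv]
      have := Real.self_lt_sinh_iff.mpr ht
      linarith
  have := h 0 (by simp) x hx hx
  simp at this
  linarith

lemma aux_sinh_ge (x : ℝ) (hx : 0 ≤ x) : x + x ^ 3 / 6 ≤ Real.sinh x := by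
  have h : ∀ y ∈ Set.Ici (0:ℝ), ∀ z ∈ Set.Ici (0:ℝ), y ≤ z →
      (fun t : ℝ => Real.sinh t - (t + t ^ 3 / 6)) y ≤
      (fun t : ℝ => Real.sinh t - (t + t ^ 3 / 6)) z := by
    apply monotoneOn_of_deriv_nonneg (convex_Ici 0)
    · fun_prop
    · intro t _
      exact (Real.differentiable_sinh.sub (by fun_prop)).differentiableAt.differentiableWithinAt
    · intro t ht
      rw [interior_Ici, Set.mem_Ioi] at ht
      have hd : HasDerivAt (fun t : ℝ => Real.sinh t - (t + t ^ 3 / 6))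
          (Real.cosh t - (1 + t ^ 2 / 2)) t := by
        have := ((Real.hasDerivAt_sinh t).sub
          ((hasDerivAt_id t).add ((hasDerivAt_id t).pow 3 |>.div_const 6)))
        exact this.congr_deriv (by simp only [id_eq]; ring)
      rw [hd.deriv]
      have := aux_cosh_ge t ht.le
      linarith
  have := h 0 (by simp) x hx hx
  simp at this
  linarith

lemma aux_sinh_le (x : ℝ) (hx : 0 ≤ x) : Real.sinh x ≤ x * Real.cosh x := by
  have h : ∀ y ∈ Set.Ici (0:ℝ), ∀ z ∈ Set.Ici (0:ℝ), y ≤ z →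
      (fun t : ℝ => t * Real.cosh t - Real.sinh t) y ≤
      (fun t : ℝ => t * Real.cosh t - Real.sinh t) z := by
    apply monotoneOn_of_deriv_nonneg (convex_Ici 0)
    · fun_prop
    · intro t _
      exact (((differentiable_id.mul Real.differentiable_cosh).sub
        Real.differentiable_sinh) t).differentiableWithinAt
    · intro t ht
      rw [interior_Ici, Set.mem_Ioi] at ht
      have hd : HasDerivAt (fun t : ℝ => t * Real.cosh t - Real.sinh t)
          (t * Real.sinh t) t := by
        have := (((hasDerivAt_id t).mul (Real.hasDerivAt_cosh t)).sub
          (Real.hasDerivAt_sinh t))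
        exact this.congr_deriv (by simp only [id_eq]; ring)
      rw [hd.deriv]
      exact mul_nonneg ht.le (by positivity)
  have := h 0 (by simp) x hx hx
  simp at this
  linarith

/-- For all x > 0, sinh(x)³ > x³ · cosh(x). -/
theorem sinh_cubed_gt :
    ∀ x : ℝ, 0 < x → Real.sinh x ^ 3 > x ^ 3 * Real.cosh x := by
  intro x hx
  have h : StrictMonoOn (fun t : ℝ => Real.sinh t ^ 3 - t ^ 3 * Real.cosh t)
      (Set.Ici 0) := by
    apply strictMonoOn_of_deriv_pos (convex_Ici 0)
    · fun_prop
    · intro t ht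
      rw [interior_Ici, Set.mem_Ioi] at ht
      have hd : HasDerivAt (fun t : ℝ => Real.sinh t ^ 3 - t ^ 3 * Real.cosh t)
          (3 * Real.sinh t ^ 2 * Real.cosh t -
            (3 * t ^ 2 * Real.cosh t + t ^ 3 * Real.sinh t)) t := by
        have := (((Real.hasDerivAt_sinh t).pow 3).sub
          (((hasDerivAt_id t).pow 3).mul (Real.hasDerivAt_cosh t)))
        exact this.congr_deriv (by simp only [id_eq, Pi.pow_apply]; ring)
      rw [hd.deriv]
      have h1 : x ∈ Set.Ici (0:ℝ) := hx.le
      have hs := aux_sinh_ge t ht.le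
      have hl := aux_sinh_le t ht.le
      have hc := Real.cosh_pos (x := t)
      have hsp : 0 ≤ Real.sinh t := by positivity
      -- sinh t ^ 2 ≥ (t + t^3/6)^2 = t^2 + t^4/3 + t^6/36
      have hsq : (t + t ^ 3 / 6) ^ 2 ≤ Real.sinh t ^ 2 := by
        apply pow_le_pow_left₀ (by positivity) hs
      have h2 : t ^ 3 * Real.sinh t ≤ t ^ 4 * Real.cosh t := by
        calc t ^ 3 * Real.sinh t ≤ t ^ 3 * (t * Real.cosh t) := by
              apply mul_le_mul_of_nonneg_left hl (by positivity)
          _ = t ^ 4 * Real.cosh t := by ring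
      nlinarith [mul_pos (pow_pos ht 6) hc, mul_le_mul_of_nonneg_right hsq hc.le]
  have := h (Set.self_mem_Ici) (Set.mem_Ici_of_Ioi hx) hx
  simpa using this
end

section
/- For all x > 0, the function h(x) = sinh(x)³/cosh(x) − x³ satisfies h'''(x) = (2/cosh(x)⁴)·(cosh(x)² − 1)²·(4·cosh(x)² + 3) > 0. -/
open Real

private lemma hd1 (x : ℝ) :
    HasDerivAt (fun x : ℝ => Real.sinh x ^ 3 / Real.cosh x - x ^ 3)
      (2 * Real.cosh x ^ 2 - 1 - 1 / Real.cosh x ^ 2 - 3 * x ^ 2) x := by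
  have hc0 : Real.cosh x ≠ 0 := (Real.cosh_pos x).ne'
  have h1 : HasDerivAt (fun x : ℝ => Real.sinh x ^ 3 / Real.cosh x - x ^ 3)
      (((3 * Real.sinh x ^ 2 * Real.cosh x) * Real.cosh x - Real.sinh x ^ 3 * Real.sinh x) /
        Real.cosh x ^ 2 - (3 : ℕ) * x ^ 2) x := by
    have hs : HasDerivAt (fun x : ℝ => Real.sinh x ^ 3)
        (3 * Real.sinh x ^ 2 * Real.cosh x) x := by
      have := (Real.hasDerivAt_sinh x).fun_pow 3
      simpa using this
    exact (hs.div (Real.hasDerivAt_cosh x) hc0).sub (by simpa using hasDerivAt_pow 3 x)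
  convert h1 using 1
  have hsq : Real.cosh x ^ 2 = Real.sinh x ^ 2 + 1 := Real.cosh_sq x
  field_simp
  push_cast
  linear_combination (2 * Real.cosh x ^ 2 - Real.sinh x ^ 2 + 1) * hsq

private lemma hd2 (x : ℝ) :
    HasDerivAt (fun x : ℝ => 2 * Real.cosh x ^ 2 - 1 - 1 / Real.cosh x ^ 2 - 3 * x ^ 2)
      (4 * Real.cosh x * Real.sinh x + 2 * Real.sinh x / Real.cosh x ^ 3 - 6 * x) x := by
  have hc0 : Real.cosh x ≠ 0 := (Real.cosh_pos x).ne'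
  have hc2 : Real.cosh x ^ 2 ≠ 0 := pow_ne_zero _ hc0
  have h1 : HasDerivAt (fun x : ℝ => 2 * Real.cosh x ^ 2)
      (2 * (2 * Real.cosh x * Real.sinh x)) x := by
    have := (Real.hasDerivAt_cosh x).fun_pow 2
    simpa using (this.const_mul 2)
  have h2 : HasDerivAt (fun x : ℝ => 1 / Real.cosh x ^ 2)
      ((0 * Real.cosh x ^ 2 - 1 * (2 * Real.cosh x * Real.sinh x)) / (Real.cosh x ^ 2) ^ 2) x := by
    have hp : HasDerivAt (fun x : ℝ => Real.cosh x ^ 2) (2 * Real.cosh x * Real.sinh x) x := by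
      have := (Real.hasDerivAt_cosh x).fun_pow 2
      simpa using this
    exact (hasDerivAt_const x (1:ℝ)).div hp hc2
  have h3 : HasDerivAt (fun x : ℝ => 3 * x ^ 2) (3 * (2 * x)) x := by
    have := (hasDerivAt_pow 2 x).const_mul (3:ℝ)
    simpa using this
  have h := ((h1.fun_sub (hasDerivAt_const x (1:ℝ))).fun_sub h2).fun_sub h3
  refine h.congr_deriv ?_
  field_simp
  ring

private lemma hd3 (x : ℝ) :
    HasDerivAt (fun x : ℝ => 4 * Real.cosh x * Real.sinh x + 2 * Real.sinh x / Real.cosh x ^ 3 - 6 * x)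
      (2 / Real.cosh x ^ 4 * (Real.cosh x ^ 2 - 1) ^ 2 * (4 * Real.cosh x ^ 2 + 3)) x := by
  have hc0 : Real.cosh x ≠ 0 := (Real.cosh_pos x).ne'
  have hc3 : Real.cosh x ^ 3 ≠ 0 := pow_ne_zero _ hc0
  have h1 : HasDerivAt (fun x : ℝ => 4 * Real.cosh x * Real.sinh x)
      (4 * Real.sinh x * Real.sinh x + 4 * Real.cosh x * Real.cosh x) x := by
    have := ((Real.hasDerivAt_cosh x).const_mul (4:ℝ)).fun_mul (Real.hasDerivAt_sinh x)
    simpa [mul_comm, mul_assoc, mul_left_comm] using this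
  have h2 : HasDerivAt (fun x : ℝ => 2 * Real.sinh x / Real.cosh x ^ 3)
      ((2 * Real.cosh x * Real.cosh x ^ 3 - 2 * Real.sinh x * (3 * Real.cosh x ^ 2 * Real.sinh x)) /
        (Real.cosh x ^ 3) ^ 2) x := by
    have hn : HasDerivAt (fun x : ℝ => 2 * Real.sinh x) (2 * Real.cosh x) x :=
      (Real.hasDerivAt_sinh x).const_mul 2
    have hp : HasDerivAt (fun x : ℝ => Real.cosh x ^ 3) (3 * Real.cosh x ^ 2 * Real.sinh x) x := by
      have := (Real.hasDerivAt_cosh x).fun_pow 3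
      simpa using this
    exact hn.div hp hc3
  have h3 : HasDerivAt (fun x : ℝ => 6 * x) 6 x := by
    simpa using (hasDerivAt_id x).const_mul (6:ℝ)
  have h := (h1.fun_add h2).fun_sub h3
  refine h.congr_deriv ?_
  have hsq : Real.cosh x ^ 2 = Real.sinh x ^ 2 + 1 := Real.cosh_sq x
  field_simp
  linear_combination (-1) * (4 * Real.cosh x ^ 4 - 6) * hsq

/-- For h(x) = sinh(x)³/cosh(x) − x³, the third derivative equals
(2/cosh(x)⁴)·(cosh(x)² − 1)²·(4·cosh(x)² + 3), which is positive for x > 0. -/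
theorem h_third_deriv :
    ∀ x : ℝ, 0 < x →
      iteratedDeriv 3 (fun x : ℝ => Real.sinh x ^ 3 / Real.cosh x - x ^ 3) x =
        2 / Real.cosh x ^ 4 * (Real.cosh x ^ 2 - 1) ^ 2 * (4 * Real.cosh x ^ 2 + 3) ∧
      0 < iteratedDeriv 3 (fun x : ℝ => Real.sinh x ^ 3 / Real.cosh x - x ^ 3) x := by
  intro x hx
  have key : iteratedDeriv 3 (fun x : ℝ => Real.sinh x ^ 3 / Real.cosh x - x ^ 3) x =
      2 / Real.cosh x ^ 4 * (Real.cosh x ^ 2 - 1) ^ 2 * (4 * Real.cosh x ^ 2 + 3) := by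
    have e1 : deriv (fun x : ℝ => Real.sinh x ^ 3 / Real.cosh x - x ^ 3) =
        fun x : ℝ => 2 * Real.cosh x ^ 2 - 1 - 1 / Real.cosh x ^ 2 - 3 * x ^ 2 :=
      funext fun y => (hd1 y).deriv
    have e2 : deriv (fun x : ℝ => 2 * Real.cosh x ^ 2 - 1 - 1 / Real.cosh x ^ 2 - 3 * x ^ 2) =
        fun x : ℝ => 4 * Real.cosh x * Real.sinh x + 2 * Real.sinh x / Real.cosh x ^ 3 - 6 * x :=
      funext fun y => (hd2 y).deriv
    have h3 : ∀ F : ℝ → ℝ, iteratedDeriv 3 F = deriv (deriv (deriv F)) := by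
      intro F
      rw [show (3:ℕ) = 2 + 1 from rfl, iteratedDeriv_succ, show (2:ℕ) = 1 + 1 from rfl,
        iteratedDeriv_succ, iteratedDeriv_one]
    rw [h3, e1, e2]
    exact (hd3 x).deriv
  refine ⟨key, ?_⟩
  rw [key]
  have hc1 : 1 < Real.cosh x := Real.one_lt_cosh.mpr hx.ne'
  have h1 : (0:ℝ) < 2 / Real.cosh x ^ 4 := by positivity
  have h2 : (0:ℝ) < (Real.cosh x ^ 2 - 1) ^ 2 := by
    have h : (0:ℝ) < Real.cosh x ^ 2 - 1 := by nlinarith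
    exact pow_pos h 2
  have h3 : (0:ℝ) < 4 * Real.cosh x ^ 2 + 3 := by positivity
  exact mul_pos (mul_pos h1 h2) h3
end

section
/- For real numbers a < y < b, the function J(λ) = yλ − log((e^{λb} − e^{λa})/λ) for λ ≠ 0, with J(0) = −log(b − a), is strictly concave on ℝ. -/
set_option maxHeartbeats 1000000

open MeasureTheory intervalIntegral Real Set

/-- Parametric differentiation of `l ↦ ∫ s in a..b, g s * exp (l * s)`. -/
lemma J_aux_hasDerivAt {a b : ℝ} (g : ℝ → ℝ) (hg : Continuous g) (l₀ : ℝ) :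
    HasDerivAt (fun l => ∫ s in a..b, g s * Real.exp (l * s))
      (∫ s in a..b, (s * g s) * Real.exp (l₀ * s)) l₀ := by
  obtain ⟨C, hC⟩ : ∃ C, ∀ t ∈ uIcc a b, |t * g t| ≤ C := by
    obtain ⟨C, hC⟩ := (isCompact_uIcc (a := a) (b := b)).exists_bound_of_continuousOn
        ((continuous_id.mul hg).continuousOn)
    refine ⟨C, fun t ht => ?_⟩
    rw [abs_mul]
    simpa [Real.norm_eq_abs, abs_mul] using hC t ht
  have hC0 : 0 ≤ C := le_trans (abs_nonneg _) (hC a left_mem_uIcc)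
  have key := intervalIntegral.hasDerivAt_integral_of_dominated_loc_of_deriv_le
    (F := fun l s => g s * Real.exp (l * s))
    (F' := fun l s => (s * g s) * Real.exp (l * s))
    (bound := fun _ => C * Real.exp ((|l₀| + 1) * (|a| + |b|)))
    (a := a) (b := b) (μ := volume) (x₀ := l₀) (Metric.ball_mem_nhds l₀ one_pos)
    (Filter.Eventually.of_forall fun x =>
      ((hg.mul ((continuous_const.mul continuous_id).rexp)).aestronglyMeasurable))
    ((hg.mul ((continuous_const.mul continuous_id).rexp)).intervalIntegrable a b)
    (((continuous_id.mul hg).mul ((continuous_const.mul continuous_id).rexp)).aestronglyMeasurable)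
    ?_ (intervalIntegrable_const) ?_
  · exact key.2
  · refine Filter.Eventually.of_forall fun t ht x hx => ?_
    have ht' : t ∈ uIcc a b := uIoc_subset_uIcc ht
    have htabs : |t| ≤ |a| + |b| := by
      rcases le_total a b with h | h
      · simp [uIcc_of_le h] at ht'
        calc |t| ≤ max |a| |b| := abs_le_max_abs_abs ht'.1 ht'.2
          _ ≤ |a| + |b| := max_le (le_add_of_nonneg_right (abs_nonneg _))
            (le_add_of_nonneg_left (abs_nonneg _))
      · simp [uIcc_of_ge h] at ht'
        calc |t| ≤ max |b| |a| := abs_le_max_abs_abs ht'.1 ht'.2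
          _ ≤ |a| + |b| := max_le (le_add_of_nonneg_left (abs_nonneg _))
            (le_add_of_nonneg_right (abs_nonneg _))
    have hxabs : |x| ≤ |l₀| + 1 := by
      have := mem_ball_iff_norm.mp hx
      rw [Real.norm_eq_abs] at this
      calc |x| = |l₀ + (x - l₀)| := by ring_nf
        _ ≤ |l₀| + |x - l₀| := abs_add_le _ _
        _ ≤ |l₀| + 1 := by linarith
    have hexp : Real.exp (x * t) ≤ Real.exp ((|l₀| + 1) * (|a| + |b|)) := by
      apply Real.exp_le_exp.mpr
      calc x * t ≤ |x * t| := le_abs_self _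
        _ = |x| * |t| := abs_mul _ _
        _ ≤ (|l₀| + 1) * (|a| + |b|) := by
            apply mul_le_mul hxabs htabs (abs_nonneg _)
            positivity
    calc ‖(t * g t) * Real.exp (x * t)‖ = |t * g t| * Real.exp (x * t) := by
          rw [Real.norm_eq_abs, abs_mul, abs_of_pos (Real.exp_pos _)]
      _ ≤ C * Real.exp ((|l₀| + 1) * (|a| + |b|)) :=
          mul_le_mul (hC t ht') hexp (le_of_lt (Real.exp_pos _)) hC0
  · refine Filter.Eventually.of_forall fun t _ x _ => ?_
    have h1 : HasDerivAt (fun x : ℝ => x * t) t x := hasDerivAt_mul_const t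
    have h2 : HasDerivAt (fun x : ℝ => Real.exp (x * t)) (Real.exp (x * t) * t) x := h1.exp
    have := h2.const_mul (g t)
    convert this using 1
    · rfl
    ring

/-- For a < y < b, the function J(λ) = yλ − log((e^{λb} − e^{λa})/λ) (λ ≠ 0),
J(0) = −log(b − a), is strictly concave on ℝ. -/
theorem J_strictConcave (a y b : ℝ) (hay : a < y) (hyb : y < b)
    (J : ℝ → ℝ)
    (hJ : J = fun l : ℝ =>
      if l = 0 then -Real.log (b - a)
      else y * l - Real.log ((Real.exp (l * b) - Real.exp (l * a)) / l)) :
    StrictConcaveOn ℝ Set.univ J := by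
  have hab : a < b := hay.trans hyb
  set G : ℝ → ℝ := fun l => ∫ s in a..b, Real.exp (l * s) with hGdef
  set G1 : ℝ → ℝ := fun l => ∫ s in a..b, s * Real.exp (l * s) with hG1def
  set G2 : ℝ → ℝ := fun l => ∫ s in a..b, s ^ 2 * Real.exp (l * s) with hG2def
  -- derivatives
  have hGd : ∀ l, HasDerivAt G (G1 l) l := by
    intro l
    have := J_aux_hasDerivAt (a := a) (b := b) (fun _ => (1 : ℝ)) continuous_const l
    simpa [hGdef, hG1def] using this
  have hG1d : ∀ l, HasDerivAt G1 (G2 l) l := by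
    intro l
    have := J_aux_hasDerivAt (a := a) (b := b) (fun s => s) continuous_id l
    simpa [hG1def, hG2def, sq] using this
  have hGpos : ∀ l, 0 < G l := fun l =>
    intervalIntegral_pos_of_pos
      (((continuous_const.mul continuous_id).rexp).intervalIntegrable a b)
      (fun s => Real.exp_pos _) hab
  -- variance positivity : G2 l * G l - G1 l ^ 2 > 0
  have hvar : ∀ l, 0 < G2 l * G l - G1 l * G1 l := by
    intro l
    set m : ℝ := G1 l / G l with hm
    have hcont : ∀ c : ℝ, Continuous fun s : ℝ => (s - c) ^ 2 * Real.exp (l * s) := fun c =>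
      ((continuous_id.sub continuous_const).pow 2).mul
        ((continuous_const.mul continuous_id).rexp)
    set mid : ℝ := (a + b) / 2 with hmiddef
    set I : ℝ := ∫ s in a..b, (s - m) ^ 2 * Real.exp (l * s) with hI
    have hIpos : 0 < I := by
      have hint : ∀ u v : ℝ, IntervalIntegrable (fun s => (s - m) ^ 2 * Real.exp (l * s)) volume u v :=
        fun u v => (hcont m).intervalIntegrable u v
      have hsplit : I = (∫ s in a..mid, (s - m) ^ 2 * Real.exp (l * s))
          + ∫ s in mid..b, (s - m) ^ 2 * Real.exp (l * s) :=
        (integral_add_adjacent_intervals (hint _ _) (hint _ _)).symm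
      have hmid1 : a < mid := by rw [hmiddef]; linarith
      have hmid2 : mid < b := by rw [hmiddef]; linarith
      rcases le_or_gt m mid with hm' | hm'
      · have h1 : 0 ≤ ∫ s in a..mid, (s - m) ^ 2 * Real.exp (l * s) :=
          intervalIntegral.integral_nonneg hmid1.le fun u _ => by positivity
        have h2 : 0 < ∫ s in mid..b, (s - m) ^ 2 * Real.exp (l * s) := by
          apply intervalIntegral_pos_of_pos_on (hint _ _) _ hmid2
          intro x hx
          have hd : x - m > 0 := by cases hx; linarith
          have hsq : 0 < (x - m) ^ 2 := by nlinarith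
          exact mul_pos hsq (Real.exp_pos _)
        linarith [hsplit]
      · have h2 : 0 ≤ ∫ s in mid..b, (s - m) ^ 2 * Real.exp (l * s) :=
          intervalIntegral.integral_nonneg hmid2.le fun u _ => by positivity
        have h1 : 0 < ∫ s in a..mid, (s - m) ^ 2 * Real.exp (l * s) := by
          apply intervalIntegral_pos_of_pos_on (hint _ _) _ hmid1
          intro x hx
          have hd : x - m < 0 := by cases hx; linarith
          have hsq : 0 < (x - m) ^ 2 := by nlinarith
          exact mul_pos hsq (Real.exp_pos _)
        linarith [hsplit]
    have hexpand : I = G2 l - 2 * m * G1 l + m ^ 2 * G l := by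
      have e1 : ∀ s : ℝ, (s - m) ^ 2 * Real.exp (l * s)
          = s ^ 2 * Real.exp (l * s) - (2 * m) * (s * Real.exp (l * s))
            + m ^ 2 * Real.exp (l * s) := fun s => by ring
      have i2 : IntervalIntegrable (fun s => s ^ 2 * Real.exp (l * s)) volume a b :=
        ((continuous_id.pow 2).mul ((continuous_const.mul continuous_id).rexp)).intervalIntegrable a b
      have i1 : IntervalIntegrable (fun s => (2 * m) * (s * Real.exp (l * s))) volume a b :=
        (continuous_const.mul (continuous_id.mul
          ((continuous_const.mul continuous_id).rexp))).intervalIntegrable a b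
      have i0 : IntervalIntegrable (fun s => m ^ 2 * Real.exp (l * s)) volume a b :=
        (continuous_const.mul ((continuous_const.mul continuous_id).rexp)).intervalIntegrable a b
      calc I = ∫ s in a..b, (s ^ 2 * Real.exp (l * s) - (2 * m) * (s * Real.exp (l * s))
            + m ^ 2 * Real.exp (l * s)) := by rw [hI]; congr 1; ext s; exact e1 s
        _ = ((∫ s in a..b, s ^ 2 * Real.exp (l * s))
              - ∫ s in a..b, (2 * m) * (s * Real.exp (l * s)))
              + ∫ s in a..b, m ^ 2 * Real.exp (l * s) := by
            rw [intervalIntegral.integral_add (i2.sub i1) i0, intervalIntegral.integral_sub i2 i1]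
        _ = G2 l - 2 * m * G1 l + m ^ 2 * G l := by
            rw [intervalIntegral.integral_const_mul, intervalIntegral.integral_const_mul]
    have hGne : G l ≠ 0 := (hGpos l).ne'
    have : G2 l * G l - G1 l * G1 l = G l * I := by
      rw [hexpand, hm]; field_simp; ring
    rw [this]
    exact mul_pos (hGpos l) hIpos
  -- K = log ∘ G is strictly convex
  set K : ℝ → ℝ := fun l => Real.log (G l) with hKdef
  have hKd : ∀ l, HasDerivAt K (G1 l / G l) l := fun l => (hGd l).log (hGpos l).ne'
  have hratio : ∀ l, HasDerivAt (fun l => G1 l / G l)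
      ((G2 l * G l - G1 l * G1 l) / G l ^ 2) l := fun l =>
    (hG1d l).div (hGd l) (hGpos l).ne'
  have hderivK : deriv K = fun l => G1 l / G l := funext fun l => (hKd l).deriv
  have hmono : StrictMono (deriv K) := by
    rw [hderivK]
    apply strictMono_of_deriv_pos
    intro x
    rw [(hratio x).deriv]
    exact div_pos (hvar x) (pow_pos (hGpos x) 2)
  have hKdiff : Differentiable ℝ K := fun l => (hKd l).differentiableAt
  have hKconv : StrictConvexOn ℝ univ K :=
    StrictMono.strictConvexOn_univ_of_deriv hKdiff.continuous hmono
  -- identify J with l ↦ y * l - K l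
  have hGval : ∀ l : ℝ, l ≠ 0 → G l = (Real.exp (l * b) - Real.exp (l * a)) / l := by
    intro l hl
    rw [hGdef]
    simp only
    rw [intervalIntegral.integral_comp_mul_left Real.exp hl]
    rw [integral_exp]
    rw [smul_eq_mul]
    ring
  have hG0 : G 0 = b - a := by
    rw [hGdef]; simp
  have hJK : J = fun l => y * l + (-K l) := by
    funext l
    rw [hJ]
    by_cases hl : l = 0
    · subst hl
      simp [hKdef, hG0]
    · simp only [if_neg hl, hKdef]
      rw [hGval l hl]
      ring
  rw [hJK]
  have h1 : StrictConcaveOn ℝ univ (fun l => -K l) := hKconv.neg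
  have h2 : ConcaveOn ℝ univ (fun l : ℝ => y * l) := by
    refine ⟨convex_univ, fun x _ z _ p q hp hq hpq => le_of_eq ?_⟩
    simp [smul_eq_mul]; ring
  have := h2.add_strictConcaveOn h1
  exact this
end

section
/- Let a < y < b, c = (a+b)/2, d = b − a, and let λ* be the unique maximizer over ℝ of J(λ) = yλ − log((e^{λb} − e^{λa})/λ) (with J(0) = −log(b−a)). Then λ* = (2/d)·φ^{−1}(2(y − c)/d), where φ(x) = cosh(x)/sinh(x) − 1/x extended to ℝ by φ(0) = 0 and φ(−x) = −φ(x); equivalently, if λ* ≠ 0 then φ(λ* d/2) = 2(y − c)/d. -/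
open Real Set

lemma aux_sinh_lt_mul_cosh {x : ℝ} (hx : 0 < x) : Real.sinh x < x * Real.cosh x := by
  have h : StrictMonoOn (fun t : ℝ => t * Real.cosh t - Real.sinh t) (Set.Ici 0) := by
    apply strictMonoOn_of_deriv_pos (convex_Ici 0)
    · fun_prop
    · intro t ht
      rw [interior_Ici] at ht
      have hD : HasDerivAt (fun t : ℝ => t * Real.cosh t - Real.sinh t) (t * Real.sinh t) t := by
        exact (((hasDerivAt_id t).mul (Real.hasDerivAt_cosh t)).sub (Real.hasDerivAt_sinh t)).congr_deriv (by simp only [id]; ring)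
      rw [hD.deriv]
      exact mul_pos ht (Real.sinh_pos_iff.2 ht)
  have := h (Set.mem_Ici.2 le_rfl) (Set.mem_Ici.2 hx.le) hx
  simp only [Real.cosh_zero, Real.sinh_zero, mul_one, zero_mul, sub_zero] at this
  linarith

lemma aux_cosh_one_lt_two : Real.cosh 1 < 2 := by
  rw [Real.cosh_eq]
  have h1 : Real.exp 1 < 2.7182818286 := Real.exp_one_lt_d9
  have h2 : Real.exp (-1) < 1 := by
    rw [show (1:ℝ) = Real.exp 0 by simp]
    exact Real.exp_lt_exp.2 (by norm_num)
  norm_num at h1 ⊢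
  linarith

lemma aux_sinh_le_two_mul {x : ℝ} (h0 : 0 ≤ x) (h1 : x ≤ 1) : Real.sinh x ≤ 2 * x := by
  have hder : ∀ t : ℝ, HasDerivAt (fun t : ℝ => 2 * t - Real.sinh t) (2 - Real.cosh t) t := by
    intro t
    exact (((hasDerivAt_id t).const_mul 2).sub (Real.hasDerivAt_sinh t)).congr_deriv (by ring)
  have h : MonotoneOn (fun t : ℝ => 2 * t - Real.sinh t) (Set.Icc 0 1) := by
    apply monotoneOn_of_deriv_nonneg (convex_Icc 0 1)
    · fun_prop
    · exact fun t _ => (hder t).differentiableAt.differentiableWithinAt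
    · intro t ht
      rw [interior_Icc] at ht
      rw [(hder t).deriv]
      have : Real.cosh t ≤ Real.cosh 1 := by
        rw [Real.cosh_le_cosh, abs_of_pos ht.1, abs_one]
        exact ht.2.le
      linarith [aux_cosh_one_lt_two]
  have := h (Set.mem_Icc.2 ⟨le_rfl, by norm_num⟩) (Set.mem_Icc.2 ⟨h0, h1⟩) h0
  simp only [Real.sinh_zero, mul_zero, sub_zero] at this
  linarith

lemma aux_cosh_sub_one_le_sq {x : ℝ} (h1 : |x| ≤ 1) : Real.cosh x - 1 ≤ x ^ 2 := by
  wlog h0 : 0 ≤ x with H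
  · push_neg at h0
    have := H (x := -x) (by rwa [abs_neg]) (by linarith)
    simpa using this
  rw [abs_of_nonneg h0] at h1
  have hder : ∀ t : ℝ, HasDerivAt (fun t : ℝ => t ^ 2 - Real.cosh t + 1)
      (2 * t - Real.sinh t) t := by
    intro t
    simpa [mul_comm] using ((hasDerivAt_pow 2 t).sub (Real.hasDerivAt_cosh t)).add_const 1
  have h : MonotoneOn (fun t : ℝ => t ^ 2 - Real.cosh t + 1) (Set.Icc 0 1) := by
    apply monotoneOn_of_deriv_nonneg (convex_Icc 0 1)
    · fun_prop
    · exact fun t _ => (hder t).differentiableAt.differentiableWithinAt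
    · intro t ht
      rw [interior_Icc] at ht
      rw [(hder t).deriv]
      linarith [aux_sinh_le_two_mul ht.1.le ht.2.le]
  have := h (Set.mem_Icc.2 ⟨le_rfl, by norm_num⟩) (Set.mem_Icc.2 ⟨h0, h1⟩) h0
  simp only [Real.cosh_zero] at this
  nlinarith

lemma aux_f0_strictMonoOn :
    StrictMonoOn (fun t : ℝ => Real.cosh t / Real.sinh t - 1 / t) (Set.Ioi 0) := by
  apply strictMonoOn_of_deriv_pos (convex_Ioi 0)
  · apply ContinuousOn.sub
    · exact Real.continuous_cosh.continuousOn.div Real.continuous_sinh.continuousOn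
        (fun t ht => Real.sinh_ne_zero.2 (ne_of_gt ht))
    · exact continuousOn_const.div continuousOn_id (fun t ht => ne_of_gt ht)
  · intro t htt
    rw [interior_Ioi] at htt
    have ht : 0 < t := htt
    have hs : 0 < Real.sinh t := Real.sinh_pos_iff.2 ht
    have hts : t < Real.sinh t := Real.self_lt_sinh_iff.2 ht
    have h2 : HasDerivAt (fun y : ℝ => 1 / y) (-(t ^ 2)⁻¹) t := by
      apply (hasDerivAt_inv (ne_of_gt ht)).congr_of_eventuallyEq
      filter_upwards with y
      simp [one_div]
    have hD : HasDerivAt (fun t : ℝ => Real.cosh t / Real.sinh t - 1 / t)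
        ((Real.sinh t * Real.sinh t - Real.cosh t * Real.cosh t) / Real.sinh t ^ 2
          - -(t ^ 2)⁻¹) t :=
      ((Real.hasDerivAt_cosh t).div (Real.hasDerivAt_sinh t) (ne_of_gt hs)).sub h2
    rw [hD.deriv]
    have hm1 : Real.sinh t * Real.sinh t - Real.cosh t * Real.cosh t = -1 := by
      nlinarith [Real.cosh_sq t]
    rw [hm1]
    have key : 1 / Real.sinh t ^ 2 < 1 / t ^ 2 := by
      apply one_div_lt_one_div_of_lt (pow_pos ht 2)
      nlinarith
    have e : (-1 : ℝ) / Real.sinh t ^ 2 - -(t ^ 2)⁻¹ = 1 / t ^ 2 - 1 / Real.sinh t ^ 2 := by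
      ring
    rw [e]
    linarith

lemma aux_phi_pos {x : ℝ} (hx : 0 < x) :
    0 < (fun x : ℝ => if x = 0 then 0 else Real.cosh x / Real.sinh x - 1 / x) x := by
  have hs : 0 < Real.sinh x := Real.sinh_pos_iff.2 hx
  simp only [if_neg (ne_of_gt hx)]
  rw [sub_pos, div_lt_div_iff₀ hx hs]
  have := aux_sinh_lt_mul_cosh hx
  linarith

lemma aux_phi_odd (x : ℝ) :
    (fun x : ℝ => if x = 0 then 0 else Real.cosh x / Real.sinh x - 1 / x) (-x)
      = -(fun x : ℝ => if x = 0 then 0 else Real.cosh x / Real.sinh x - 1 / x) x := by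
  rcases eq_or_ne x 0 with h | h
  · simp [h]
  · simp only [if_neg h, if_neg (neg_ne_zero.2 h), Real.cosh_neg, Real.sinh_neg, div_neg]
    ring

lemma aux_phi_neg {x : ℝ} (hx : x < 0) :
    (fun x : ℝ => if x = 0 then 0 else Real.cosh x / Real.sinh x - 1 / x) x < 0 := by
  have h := aux_phi_odd x
  have hp := aux_phi_pos (x := -x) (by linarith)
  rw [h] at hp
  linarith

lemma aux_phi_strictMono :
    StrictMono (fun x : ℝ => if x = 0 then 0 else Real.cosh x / Real.sinh x - 1 / x) := by
  set φ := fun x : ℝ => if x = 0 then 0 else Real.cosh x / Real.sinh x - 1 / x with hφ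
  have hmonoPos : ∀ x y : ℝ, 0 < x → x < y → φ x < φ y := by
    intro x y hx hxy
    have hy : 0 < y := hx.trans hxy
    have := aux_f0_strictMonoOn (Set.mem_Ioi.2 hx) (Set.mem_Ioi.2 hy) hxy
    simpa [hφ, if_neg (ne_of_gt hx), if_neg (ne_of_gt hy)] using this
  intro x y hxy
  rcases lt_trichotomy x 0 with hx | hx | hx
  · rcases lt_trichotomy y 0 with hy | hy | hy
    · have h1 := hmonoPos (-y) (-x) (by linarith) (by linarith)
      have ex := aux_phi_odd x
      have ey := aux_phi_odd y
      rw [← hφ] at ex ey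
      rw [ex, ey] at h1
      linarith
    · have h1 : φ y = 0 := by simp [hφ, hy]
      rw [h1]
      have := aux_phi_neg hx
      rwa [← hφ] at this
    · have h1 := aux_phi_neg hx
      have h2 := aux_phi_pos hy
      rw [← hφ] at h1 h2
      exact h1.trans h2
  · have hy : 0 < y := by rw [hx] at hxy; exact hxy
    have : φ x = 0 := by simp [hφ, hx]
    rw [this]
    have := aux_phi_pos hy
    rwa [← hφ] at this
  · exact hmonoPos x y hx hxy

lemma aux_phi_injective :
    Function.Injective (fun x : ℝ => if x = 0 then 0 else Real.cosh x / Real.sinh x - 1 / x) :=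
  aux_phi_strictMono.injective


/-- For a < y < b, c = (a+b)/2, d = b − a, the unique maximizer λ* of
J(λ) = yλ − log((e^{λb} − e^{λa})/λ) satisfies λ* = (2/d)·φ⁻¹(2(y − c)/d),
where φ is the odd extension of x ↦ cosh(x)/sinh(x) − 1/x with φ(0) = 0;
equivalently, if λ* ≠ 0 then φ(λ*·d/2) = 2(y − c)/d. -/
theorem J_maximizer_formula (a y b c d : ℝ) (hay : a < y) (hyb : y < b)
    (hc : c = (a + b) / 2) (hd : d = b - a)
    (φ : ℝ → ℝ)
    (hφ : φ = fun x : ℝ => if x = 0 then 0 else Real.cosh x / Real.sinh x - 1 / x)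
    (J : ℝ → ℝ)
    (hJ : J = fun l : ℝ =>
      if l = 0 then -Real.log (b - a)
      else y * l - Real.log ((Real.exp (l * b) - Real.exp (l * a)) / l))
    (lam : ℝ) (hmax : ∀ m : ℝ, J m ≤ J lam) :
    lam = (2 / d) * Function.invFun φ (2 * (y - c) / d) ∧
    (lam ≠ 0 → φ (lam * d / 2) = 2 * (y - c) / d) := by
  have hab : a < b := hay.trans hyb
  have hd0 : 0 < d := by rw [hd]; linarith
  have hb' : b = c + d / 2 := by rw [hc, hd]; ring
  have ha' : a = c - d / 2 := by rw [hc, hd]; ring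
  have hinj : Function.Injective φ := by rw [hφ]; exact aux_phi_injective
  have hsinh_div_pos : ∀ u : ℝ, u ≠ 0 → 0 < Real.sinh u / u := by
    intro u hu
    rcases hu.lt_or_gt with h | h
    · exact div_pos_of_neg_of_neg (Real.sinh_neg_iff.2 h) h
    · exact div_pos (Real.sinh_pos_iff.2 h) h
  -- value of J off zero
  have hJval : ∀ m : ℝ, m ≠ 0 →
      J m = (y - c) * m - Real.log d - Real.log (Real.sinh (m * d / 2) / (m * d / 2)) := by
    intro m hm
    have hu : m * d / 2 ≠ 0 := by
      intro h
      rcases mul_eq_zero.1 (div_eq_zero_iff.1 h |>.resolve_right (by norm_num)) with h' | h'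
      · exact hm h'
      · exact (ne_of_gt hd0) h'
    have hfac : Real.exp (m * b) - Real.exp (m * a)
        = Real.exp (m * c) * (2 * Real.sinh (m * d / 2)) := by
      rw [hb', ha', show m * (c + d / 2) = m * c + m * d / 2 by ring, Real.exp_add,
        show m * (c - d / 2) = m * c + -(m * d / 2) by ring, Real.exp_add, Real.sinh_eq]
      ring
    have hdiv : (Real.exp (m * b) - Real.exp (m * a)) / m
        = Real.exp (m * c) * (d * (Real.sinh (m * d / 2) / (m * d / 2))) := by
      rw [hfac]
      field_simp
    rw [hJ]
    simp only [if_neg hm]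
    rw [hdiv, Real.log_mul (Real.exp_ne_zero _) (by positivity), Real.log_exp,
      Real.log_mul (ne_of_gt hd0) (ne_of_gt (hsinh_div_pos _ hu))]
    ring
  have hJ0 : J 0 = -Real.log d := by rw [hJ]; simp [hd]
  have hloc : IsLocalMax J lam := Filter.Eventually.of_forall hmax
  rcases eq_or_ne lam 0 with hl | hl
  · -- lam = 0 : show y = c
    subst hl
    have key : ∀ u : ℝ, u ≠ 0 → (y - c) * (2 * u / d) ≤ Real.log (Real.sinh u / u) := by
      intro u hu
      have hm : (2 : ℝ) * u / d ≠ 0 := by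
        simp only [ne_eq, div_eq_zero_iff, mul_eq_zero]
        push_neg
        exact ⟨⟨by norm_num, hu⟩, ne_of_gt hd0⟩
      have h := hmax (2 * u / d)
      rw [hJ0, hJval _ hm] at h
      have hu' : 2 * u / d * d / 2 = u := by field_simp
      rw [hu'] at h
      linarith
    have hbound : ∀ u : ℝ, u ≠ 0 → |u| ≤ 1 → Real.log (Real.sinh u / u) ≤ u ^ 2 := by
      intro u hu h1
      have hq : Real.sinh u / u ≤ Real.cosh u := by
        rcases hu.lt_or_gt with h | h
        · have := aux_sinh_lt_mul_cosh (x := -u) (by linarith)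
          rw [Real.sinh_neg, Real.cosh_neg] at this
          rw [div_le_iff_of_neg h]
          nlinarith
        · rw [div_le_iff₀ h]
          nlinarith [aux_sinh_lt_mul_cosh h]
      calc Real.log (Real.sinh u / u) ≤ Real.sinh u / u - 1 :=
            Real.log_le_sub_one_of_pos (hsinh_div_pos u hu)
        _ ≤ Real.cosh u - 1 := by linarith
        _ ≤ u ^ 2 := aux_cosh_sub_one_le_sq h1
    have hqle : ∀ ε : ℝ, 0 < ε → ε ≤ 1 → 2 * (y - c) / d ≤ ε := by
      intro ε hε hε1
      have h := (key ε (ne_of_gt hε)).trans (hbound ε (ne_of_gt hε) (by rw [abs_of_pos hε]; exact hε1))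
      have h2 : (y - c) * (2 * ε / d) = 2 * (y - c) / d * ε := by ring
      rw [h2, sq] at h
      exact le_of_mul_le_mul_right h hε
    have hqge : ∀ ε : ℝ, 0 < ε → ε ≤ 1 → -ε ≤ 2 * (y - c) / d := by
      intro ε hε hε1
      have h := (key (-ε) (by simp [ne_of_gt hε])).trans
        (hbound (-ε) (by simp [ne_of_gt hε]) (by rw [abs_neg, abs_of_pos hε]; exact hε1))
      have : (y - c) * (2 * -ε / d) = -(2 * (y - c) / d) * ε := by ring
      rw [this] at h
      have h2 : -(2 * (y - c) / d) * ε ≤ ε * ε := by nlinarith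
      nlinarith
    have hq0 : 2 * (y - c) / d = 0 := by
      set q := 2 * (y - c) / d with hq
      rcases lt_trichotomy q 0 with h | h | h
      · exfalso
        have hε : 0 < min 1 (-q / 2) := lt_min one_pos (by linarith)
        have := hqge (min 1 (-q / 2)) hε (min_le_left _ _)
        have h2 : min 1 (-q / 2) ≤ -q / 2 := min_le_right _ _
        linarith
      · exact h
      · exfalso
        have hε : 0 < min 1 (q / 2) := lt_min one_pos (by linarith)
        have := hqle (min 1 (q / 2)) hε (min_le_left _ _)
        have h2 : min 1 (q / 2) ≤ q / 2 := min_le_right _ _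
        linarith
    have hφ0 : φ 0 = 0 := by rw [hφ]; simp
    have hiv : Function.invFun φ (2 * (y - c) / d) = 0 := by
      rw [hq0]
      conv_lhs => rw [← hφ0]
      exact Function.leftInverse_invFun hinj 0
    constructor
    · rw [hiv, mul_zero]
    · intro h
      exact absurd rfl h
  · -- lam ≠ 0
    have ht0 : lam * d / 2 ≠ 0 := by
      intro h
      rcases mul_eq_zero.1 (div_eq_zero_iff.1 h |>.resolve_right (by norm_num)) with h' | h'
      · exact hl h'
      · exact (ne_of_gt hd0) h'
    have hEfac : Real.exp (lam * b) - Real.exp (lam * a)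
        = Real.exp (lam * c) * (2 * Real.sinh (lam * d / 2)) := by
      rw [hb', ha', show lam * (c + d / 2) = lam * c + lam * d / 2 by ring, Real.exp_add,
        show lam * (c - d / 2) = lam * c + -(lam * d / 2) by ring, Real.exp_add, Real.sinh_eq]
      ring
    have hsl : 0 < Real.sinh (lam * d / 2) / lam := by
      rcases hl.lt_or_gt with h | h
      · exact div_pos_of_neg_of_neg (Real.sinh_neg_iff.2 (by
          apply div_neg_of_neg_of_pos _ two_pos
          exact mul_neg_of_neg_of_pos h hd0)) h
      · exact div_pos (Real.sinh_pos_iff.2 (by positivity)) h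
    have hE0 : (Real.exp (lam * b) - Real.exp (lam * a)) / lam ≠ 0 := by
      rw [hEfac, show Real.exp (lam * c) * (2 * Real.sinh (lam * d / 2)) / lam
        = Real.exp (lam * c) * 2 * (Real.sinh (lam * d / 2) / lam) by ring]
      positivity
    have hEne : Real.exp (lam * b) - Real.exp (lam * a) ≠ 0 := by
      intro h
      rw [h] at hE0
      simp at hE0
    -- derivative of J at lam
    have hb1 : HasDerivAt (fun l : ℝ => Real.exp (l * b)) (Real.exp (lam * b) * b) lam :=
      (hasDerivAt_mul_const b).exp
    have ha1 : HasDerivAt (fun l : ℝ => Real.exp (l * a)) (Real.exp (lam * a) * a) lam :=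
      (hasDerivAt_mul_const a).exp
    have hdivD := ((hb1.sub ha1).div (hasDerivAt_id lam) hl)
    have hlogD := hdivD.log hE0
    have hFD := ((hasDerivAt_id lam).const_mul y).sub hlogD
    have hJeq : J =ᶠ[nhds lam] (fun l : ℝ =>
        y * l - Real.log ((Real.exp (l * b) - Real.exp (l * a)) / l)) := by
      filter_upwards [eventually_ne_nhds hl] with x hx
      rw [hJ]
      simp only [if_neg hx]
    have hJD := hFD.congr_of_eventuallyEq hJeq
    have hD0 := hloc.hasDerivAt_eq_zero hJD
    -- now extract the equation
    simp only [id_eq, mul_one, Pi.sub_apply, Pi.div_apply] at hD0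
    have hs0 : Real.sinh (lam * d / 2) ≠ 0 := Real.sinh_ne_zero.2 ht0
    have hphi : φ (lam * d / 2) = 2 * (y - c) / d := by
      rw [hφ]
      simp only [if_neg ht0]
      rw [hb', ha', show lam * (c + d / 2) = lam * c + lam * d / 2 by ring,
        show lam * (c - d / 2) = lam * c + -(lam * d / 2) by ring,
        Real.exp_add, Real.exp_add] at hD0
      have hPQ : Real.exp (lam * d / 2) * Real.exp (-(lam * d / 2)) = 1 := by
        rw [← Real.exp_add]; simp
      have hPQne : Real.exp (lam * d / 2) - Real.exp (-(lam * d / 2)) ≠ 0 := by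
        have h2 : Real.exp (lam * d / 2) - Real.exp (-(lam * d / 2))
            = 2 * Real.sinh (lam * d / 2) := by rw [Real.sinh_eq]; ring
        rw [h2]
        simpa using hs0
      rw [Real.cosh_eq, Real.sinh_eq]
      set A := Real.exp (lam * c) with hA
      set P := Real.exp (lam * d / 2) with hP
      set Q := Real.exp (-(lam * d / 2)) with hQ
      have hA0 : A ≠ 0 := Real.exp_ne_zero _
      have hAPQ : A * P - A * Q ≠ 0 := by
        rw [show A * P - A * Q = A * (P - Q) by ring]
        exact mul_ne_zero hA0 hPQne
      field_simp [hAPQ] at hD0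
      field_simp [hPQne]
      have hD1 : y * (2 * lam * (P - Q)) -
          ((P * (c * 2 + d) - Q * (c * 2 - d)) * lam - 2 * (P - Q)) = 0 := by
        have h2 : A * lam * (y * (2 * lam * (P - Q)) -
            ((P * (c * 2 + d) - Q * (c * 2 - d)) * lam - 2 * (P - Q))) = 0 := by
          linear_combination (A * lam) * hD0
        exact (mul_eq_zero.1 h2).resolve_left (mul_ne_zero hA0 hl)
      linear_combination (-1) * hD1
    refine ⟨?_, fun _ => hphi⟩
    rw [← hphi, Function.leftInverse_invFun hinj]
    field_simp
end

section
/- Let f: ℝ → [0,∞) be Lipschitz with constant L and bounded below by m > 0 on an interval [t_k, t_{k−1}] with t_k < t_{k−1}. Define q = ∫_{t_k}^{t_{k−1}} f(y) dy, ȳ = (1/q)∫_{t_k}^{t_{k−1}} y f(y) dy, and t̄ = (t_k + t_{k−1})/2. Then |ȳ − t̄| ≤ (L/(6m))·(t_{k−1} − t_k)². -/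
open intervalIntegral

/-- If f is Lipschitz with constant L and bounded below by m > 0 on [t_k, t_{k−1}],
then the conditional mean ȳ of the bin deviates from the midpoint by at most
(L/(6m))·(t_{k−1} − t_k)². -/
theorem bin_mean_midpoint_bound
    (f : ℝ → ℝ) (L m tk tk1 q ybar : ℝ)
    (hf0 : ∀ y : ℝ, 0 ≤ f y)
    (hL : 0 < L)
    (hLip : ∀ y₁ y₂ : ℝ, |f y₁ - f y₂| ≤ L * |y₁ - y₂|)
    (hm : 0 < m)
    (hfm : ∀ y ∈ Set.Icc tk tk1, m ≤ f y)
    (ht : tk < tk1)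
    (hq : q = ∫ y in tk..tk1, f y)
    (hybar : ybar = (∫ y in tk..tk1, y * f y) / q) :
    |ybar - (tk + tk1) / 2| ≤ L / (6 * m) * (tk1 - tk) ^ 2 := by
  set c := (tk + tk1) / 2 with hc
  set h := tk1 - tk with hh
  have hhpos : 0 < h := by rw [hh]; linarith
  have hcont : Continuous f := by
    have : LipschitzWith L.toNNReal f := by
      apply LipschitzWith.of_dist_le_mul
      intro x y
      simpa [Real.dist_eq, Real.coe_toNNReal L hL.le] using hLip x y
    exact this.continuous
  have hint : IntervalIntegrable f MeasureTheory.volume tk tk1 := hcont.intervalIntegrable _ _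
  have hqlb : m * h ≤ q := by
    rw [hq]
    have := intervalIntegral.integral_mono_on (μ := MeasureTheory.volume) ht.le
      (intervalIntegrable_const : IntervalIntegrable (fun _ => m) _ tk tk1) hint hfm
    simpa [mul_comm, hh] using this
  have hqpos : 0 < q := lt_of_lt_of_le (by positivity) hqlb
  have hint2 : IntervalIntegrable (fun y => (y - c) * f y) MeasureTheory.volume tk tk1 :=
    (((continuous_id.sub continuous_const).mul hcont)).intervalIntegrable _ _
  have e1 : ∫ y in tk..tk1, (y - c) * f y = (∫ y in tk..tk1, y * f y) - c * q := by
    have hr : ∀ y : ℝ, (y - c) * f y = y * f y - c * f y := by intro y; ring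
    simp_rw [hr]
    have i1 : IntervalIntegrable (fun y : ℝ => y * f y) MeasureTheory.volume tk tk1 :=
      (continuous_id.mul hcont).intervalIntegrable _ _
    have i2 : IntervalIntegrable (fun y : ℝ => c * f y) MeasureTheory.volume tk tk1 :=
      (continuous_const.mul hcont).intervalIntegrable _ _
    rw [intervalIntegral.integral_sub i1 i2, intervalIntegral.integral_const_mul, hq]
  have e0 : (∫ y in tk..tk1, (y - c)) = 0 := by
    rw [intervalIntegral.integral_sub intervalIntegrable_id intervalIntegrable_const,
      integral_id, intervalIntegral.integral_const, smul_eq_mul, hc]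
    ring
  have e2 : ∫ y in tk..tk1, (y - c) * f y = ∫ y in tk..tk1, (y - c) * (f y - f c) := by
    have hr : ∀ y : ℝ, (y - c) * (f y - f c) = (y - c) * f y - f c * (y - c) := by
      intro y; ring
    simp_rw [hr]
    have i3 : IntervalIntegrable (fun y : ℝ => f c * (y - c)) MeasureTheory.volume tk tk1 :=
      (continuous_const.mul (continuous_id.sub continuous_const)).intervalIntegrable _ _
    rw [intervalIntegral.integral_sub hint2 i3, intervalIntegral.integral_const_mul, e0]
    ring
  have hsq : (∫ y in tk..tk1, (y - c) ^ 2) = h ^ 3 / 12 := by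
    rw [intervalIntegral.integral_comp_sub_right (fun x => x ^ 2) c, integral_pow]
    have h1 : tk1 - c = h / 2 := by rw [hc, hh]; ring
    have h2 : tk - c = -(h / 2) := by rw [hc, hh]; ring
    rw [h1, h2]
    ring
  have hb : |∫ y in tk..tk1, (y - c) * (f y - f c)| ≤ L * h ^ 3 / 12 := by
    have hb1 : |∫ y in tk..tk1, (y - c) * (f y - f c)|
        ≤ ∫ y in tk..tk1, L * (y - c) ^ 2 := by
      have habs := intervalIntegral.norm_integral_le_integral_norm
        (f := fun y => (y - c) * (f y - f c)) (a := tk) (b := tk1) (μ := MeasureTheory.volume) ht.le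
      refine habs.trans ?_
      apply intervalIntegral.integral_mono_on ht.le
      · exact (((continuous_id.sub continuous_const).mul
          (hcont.sub continuous_const)).norm).intervalIntegrable _ _
      · exact ((continuous_const.mul
          ((continuous_id.sub continuous_const).pow 2))).intervalIntegrable _ _
      · intro y hy
        have h1 : ‖(y - c) * (f y - f c)‖ = |y - c| * |f y - f c| := by
          rw [Real.norm_eq_abs, abs_mul]
        rw [h1]
        calc |y - c| * |f y - f c| ≤ |y - c| * (L * |y - c|) :=
              mul_le_mul_of_nonneg_left (hLip y c) (abs_nonneg _)
          _ = L * (y - c) ^ 2 := by rw [sq, ← abs_mul_abs_self (y - c)]; ring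
    rw [intervalIntegral.integral_const_mul, hsq] at hb1
    linarith
  have hX : |(∫ y in tk..tk1, y * f y) - c * q| ≤ L / (6 * m) * h ^ 2 * q := by
    rw [← e1, e2]
    refine hb.trans ?_
    rw [div_mul_eq_mul_div, div_mul_eq_mul_div, div_le_div_iff₀ (by norm_num) (by positivity)]
    nlinarith [mul_le_mul_of_nonneg_left hqlb (by positivity : (0:ℝ) ≤ L * h ^ 2),
      mul_pos (mul_pos hL hm) (pow_pos hhpos 3)]
  rw [hybar]
  have hw : (∫ y in tk..tk1, y * f y) / q - c
      = ((∫ y in tk..tk1, y * f y) - c * q) / q := by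
    field_simp
  rw [hw, abs_div, abs_of_pos hqpos, div_le_iff₀ hqpos]
  exact hX
end

section
/- Let f: ℝ → [0,∞) be Lipschitz with constant L on an interval [a,b] with a < b. Then q(ȳ − m̄) = (1/8)(b−a)²(f(b) − f(a)) − ∫_a^b (1/2)(y − m̄)² f'(y) dy, where q = ∫_a^b f, qȳ = ∫_a^b y f(y) dy, and m̄ = (a+b)/2; consequently q|ȳ − m̄| ≤ (L/6)(b−a)³. -/
open intervalIntegral

open MeasureTheory Set Filter Topology


lemma tendsto_quot {u : ℝ → ℝ} {u' x : ℝ} (h : HasDerivAt u u' x) :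
    Tendsto (fun n : ℕ => ((n : ℝ) + 1) * (u (x + ((n : ℝ) + 1)⁻¹) - u x)) atTop (𝓝 u') := by
  have hs := hasDerivAt_iff_tendsto_slope.mp h
  have h0 : Tendsto (fun n : ℕ => ((n : ℝ) + 1)⁻¹) atTop (𝓝 0) := by
    simpa [one_div] using tendsto_one_div_add_atTop_nhds_zero_nat (𝕜 := ℝ)
  have h1 : Tendsto (fun n : ℕ => x + ((n : ℝ) + 1)⁻¹) atTop (𝓝[≠] x) := by
    apply tendsto_nhdsWithin_of_tendsto_nhds_of_eventually_within
    · simpa using tendsto_const_nhds.add h0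
    · filter_upwards with n
      have hn : (0 : ℝ) < ((n : ℝ) + 1)⁻¹ := by positivity
      simp only [Set.mem_compl_iff, Set.mem_singleton_iff]
      intro hEq
      nlinarith [hn]
  have h2 := hs.comp h1
  convert h2 using 2 with n
  have hn : ((n : ℝ) + 1) ≠ 0 := by positivity
  rw [Function.comp_apply, slope_def_field]
  field_simp
  ring

lemma lip_ftc {K : NNReal} {g : ℝ → ℝ} (hg : LipschitzWith K g) {a b : ℝ} (hab : a ≤ b) :
    ∫ y in a..b, deriv g y = g b - g a := by
  have gc : Continuous g := hg.continuous
  have gint : ∀ c d : ℝ, IntervalIntegrable g volume c d := fun c d => gc.intervalIntegrable c d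
  set u : ℝ → ℝ := fun t => ∫ y in a..t, g y with hu_def
  have hu : ∀ c : ℝ, HasDerivAt u (g c) c := fun c =>
    intervalIntegral.integral_hasDerivAt_right (gint a c)
      (gc.stronglyMeasurableAtFilter volume _) gc.continuousAt
  set μ := volume.restrict (Set.Ioc a b) with hμ
  set F : ℕ → ℝ → ℝ := fun n y => ((n : ℝ) + 1) * (g (y + ((n : ℝ) + 1)⁻¹) - g y) with hF_def
  have hFc : ∀ n, Continuous (F n) := by
    intro n
    exact continuous_const.mul ((gc.comp (continuous_id.add continuous_const)).sub gc)
  have key : Tendsto (fun n => ∫ y, F n y ∂μ) atTop (𝓝 (∫ y, deriv g y ∂μ)) := by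
    apply MeasureTheory.tendsto_integral_of_dominated_convergence (fun _ => (K : ℝ))
    · intro n; exact (hFc n).aestronglyMeasurable
    · rw [hμ]
      exact (integrableOn_const measure_Ioc_lt_top.ne)
    · intro n
      filter_upwards with y
      have hd := hg.dist_le_mul (y + ((n : ℝ) + 1)⁻¹) y
      rw [Real.dist_eq, Real.dist_eq] at hd
      have hn : (0 : ℝ) < (n : ℝ) + 1 := by positivity
      have hinv : (0 : ℝ) < ((n : ℝ) + 1)⁻¹ := by positivity
      have habs : |y + ((n : ℝ) + 1)⁻¹ - y| = ((n : ℝ) + 1)⁻¹ := by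
        rw [add_sub_cancel_left, abs_of_pos hinv]
      rw [habs] at hd
      rw [Real.norm_eq_abs, hF_def]
      simp only
      rw [abs_mul, abs_of_pos hn]
      calc ((n : ℝ) + 1) * |g (y + ((n : ℝ) + 1)⁻¹) - g y|
          ≤ ((n : ℝ) + 1) * ((K : ℝ) * ((n : ℝ) + 1)⁻¹) := by
            exact mul_le_mul_of_nonneg_left hd hn.le
        _ = (K : ℝ) := by field_simp
    · filter_upwards [ae_restrict_of_ae hg.ae_differentiableAt_of_real] with y hy
      exact tendsto_quot hy.hasDerivAt
  have eqF : ∀ n : ℕ, ∫ y, F n y ∂μ =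
      ((n : ℝ) + 1) * (u (b + ((n : ℝ) + 1)⁻¹) - u b)
        - ((n : ℝ) + 1) * (u (a + ((n : ℝ) + 1)⁻¹) - u a) := by
    intro n
    set h : ℝ := ((n : ℝ) + 1)⁻¹ with hh
    have h1 : ∫ y, F n y ∂μ = ∫ y in a..b, F n y := (intervalIntegral.integral_of_le hab).symm
    have hgsh : IntervalIntegrable (fun y => g (y + h)) volume a b :=
      (gc.comp (continuous_id.add continuous_const)).intervalIntegrable a b
    have h2 : ∫ y in a..b, F n y
        = ((n : ℝ) + 1) * ((∫ y in a..b, g (y + h)) - ∫ y in a..b, g y) := by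
      rw [← intervalIntegral.integral_sub hgsh (gint a b),
        ← intervalIntegral.integral_const_mul]
    have h3 : (∫ y in a..b, g (y + h)) = ∫ y in (a + h)..(b + h), g y :=
      intervalIntegral.integral_comp_add_right (fun y => g y) h
    have h4 : (∫ y in (a + h)..(b + h), g y) = u (b + h) - u (a + h) := by
      have := intervalIntegral.integral_interval_sub_left (gint a (b + h)) (gint a (a + h))
      rw [hu_def]
      simp only
      rw [← this]
    have h5 : (∫ y in a..b, g y) = u b - u a := by
      rw [hu_def]
      simp only
      rw [intervalIntegral.integral_same, sub_zero]
    rw [h1, h2, h3, h4, h5]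
    ring
  have lim2 : Tendsto (fun n : ℕ =>
      ((n : ℝ) + 1) * (u (b + ((n : ℝ) + 1)⁻¹) - u b)
        - ((n : ℝ) + 1) * (u (a + ((n : ℝ) + 1)⁻¹) - u a)) atTop (𝓝 (g b - g a)) :=
    (tendsto_quot (hu b)).sub (tendsto_quot (hu a))
  have key2 : Tendsto (fun n : ℕ =>
      ((n : ℝ) + 1) * (u (b + ((n : ℝ) + 1)⁻¹) - u b)
        - ((n : ℝ) + 1) * (u (a + ((n : ℝ) + 1)⁻¹) - u a)) atTop (𝓝 (∫ y, deriv g y ∂μ)) := by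
    apply key.congr
    intro n
    exact eqF n
  have := tendsto_nhds_unique key2 lim2
  rw [intervalIntegral.integral_of_le hab, ← hμ, this]

lemma lipOn_ftc {g : ℝ → ℝ} {a b : ℝ} {K : NNReal} (hab : a ≤ b)
    (hg : LipschitzOnWith K g (Set.Icc a b)) :
    ∫ y in a..b, deriv g y = g b - g a := by
  obtain ⟨G, hG, hEq⟩ := hg.extend_real
  have hIoo : ∀ y ∈ Set.Ioo a b, deriv g y = deriv G y := by
    intro y hy
    apply Filter.EventuallyEq.deriv_eq
    filter_upwards [Icc_mem_nhds hy.1 hy.2] with z hz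
    exact hEq hz
  have hb : ∀ᵐ y : ℝ, y ≠ b := by
    rw [ae_iff]
    have : {y : ℝ | ¬ y ≠ b} = {b} := by ext y; simp
    rw [this]
    exact Real.volume_singleton
  have hcongr : ∫ y in a..b, deriv g y = ∫ y in a..b, deriv G y := by
    apply intervalIntegral.integral_congr_ae
    filter_upwards [hb] with y hy hmem
    rw [Set.uIoc_of_le hab] at hmem
    exact hIoo y ⟨hmem.1, lt_of_le_of_ne hmem.2 hy⟩
  rw [hcongr, lip_ftc hG hab, hEq (Set.right_mem_Icc.2 hab), hEq (Set.left_mem_Icc.2 hab)]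
set_option maxHeartbeats 1000000 in
/-- For f Lipschitz with constant L on [a,b],
q(ȳ − m̄) = (1/8)(b−a)²(f(b) − f(a)) − ∫_a^b (1/2)(y − m̄)² f'(y) dy,
and consequently q|ȳ − m̄| ≤ (L/6)(b−a)³. -/
theorem bin_mean_integration_by_parts
    (f : ℝ → ℝ) (L a b q ybar mbar : ℝ)
    (hf0 : ∀ y : ℝ, 0 ≤ f y)
    (hL : 0 < L)
    (hLip : ∀ y₁ y₂ : ℝ, |f y₁ - f y₂| ≤ L * |y₁ - y₂|)
    (hab : a < b)
    (hq : q = ∫ y in a..b, f y)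
    (hq0 : 0 < q)
    (hybar : q * ybar = ∫ y in a..b, y * f y)
    (hmbar : mbar = (a + b) / 2) :
    q * (ybar - mbar) =
      (1 / 8) * (b - a) ^ 2 * (f b - f a) -
        ∫ y in a..b, (1 / 2) * (y - mbar) ^ 2 * deriv f y ∧
    q * |ybar - mbar| ≤ L / 6 * (b - a) ^ 3 := by
  subst hmbar
  have hba : (0 : ℝ) < b - a := sub_pos.2 hab
  have hlipf : LipschitzWith L.toNNReal f := by
    apply LipschitzWith.of_dist_le_mul
    intro x y
    rw [Real.dist_eq, Real.dist_eq, Real.coe_toNNReal L hL.le]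
    exact hLip x y
  have fc : Continuous f := hlipf.continuous
  have hDb : ∀ y, |deriv f y| ≤ L := by
    intro y
    by_cases hy : DifferentiableAt ℝ f y
    · have h1 : ‖fderiv ℝ f y‖ ≤ (L.toNNReal : ℝ) := norm_fderiv_le_of_lipschitz ℝ hlipf
      rw [Real.coe_toNNReal L hL.le] at h1
      have h2 : deriv f y = fderiv ℝ f y 1 := rfl
      rw [h2, ← Real.norm_eq_abs]
      calc ‖fderiv ℝ f y 1‖ ≤ ‖fderiv ℝ f y‖ * ‖(1 : ℝ)‖ := ContinuousLinearMap.le_opNorm _ _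
        _ ≤ L := by simpa using h1
    · rw [deriv_zero_of_not_differentiableAt hy]
      simpa using hL.le
  set g : ℝ → ℝ := fun y => (1 / 2) * (y - (a + b) / 2) ^ 2 * f y with hg_def
  set M : ℝ := |f a| + L * (b - a) with hM_def
  set C : ℝ := (b - a) ^ 2 / 8 * L + (b - a) / 2 * M with hC_def
  have hM0 : 0 ≤ M := by
    have := abs_nonneg (f a); nlinarith
  have hC0 : 0 ≤ C := by
    rw [hC_def]
    have : 0 ≤ (b - a) ^ 2 / 8 * L := by positivity
    have h2 : 0 ≤ (b - a) / 2 * M := mul_nonneg (by linarith) hM0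
    linarith
  have hgLip : LipschitzOnWith C.toNNReal g (Set.Icc a b) := by
    rw [lipschitzOnWith_iff_dist_le_mul]
    intro x hx y hy
    rw [Real.dist_eq, Real.dist_eq, Real.coe_toNNReal C hC0]
    have hxm : |x - (a + b) / 2| ≤ (b - a) / 2 := by
      rw [abs_le]; constructor <;> [linarith [hx.1]; linarith [hx.2]]
    have hym : |y - (a + b) / 2| ≤ (b - a) / 2 := by
      rw [abs_le]; constructor <;> [linarith [hy.1]; linarith [hy.2]]
    have hx2 : (x - (a + b) / 2) ^ 2 ≤ ((b - a) / 2) ^ 2 := by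
      rw [← sq_abs]; exact pow_le_pow_left₀ (abs_nonneg _) hxm 2
    have hfy : |f y| ≤ M := by
      have h1 := hLip y a
      have h2 : |y - a| ≤ b - a := by
        rw [abs_le]; constructor <;> [linarith [hy.1]; linarith [hy.2]]
      have h3 : |f y| ≤ |f a| + |f y - f a| := by
        calc |f y| = |f a + (f y - f a)| := by ring_nf
          _ ≤ |f a| + |f y - f a| := abs_add_le _ _
      have h4 : L * |y - a| ≤ L * (b - a) := mul_le_mul_of_nonneg_left h2 hL.le
      rw [hM_def]; linarith
    have hff : |f x - f y| ≤ L * |x - y| := hLip x y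
    have hsum : |(x - (a + b) / 2) + (y - (a + b) / 2)| ≤ b - a :=
      (abs_add_le _ _).trans (by linarith)
    have hid : g x - g y = (1 / 2) * (x - (a + b) / 2) ^ 2 * (f x - f y)
        + (1 / 2) * ((x - (a + b) / 2) + (y - (a + b) / 2)) * (x - y) * f y := by
      rw [hg_def]; ring
    have e1 : |(1 / 2) * (x - (a + b) / 2) ^ 2 * (f x - f y)|
        = (1 / 2) * (x - (a + b) / 2) ^ 2 * |f x - f y| := by
      rw [abs_mul, abs_of_nonneg (show (0:ℝ) ≤ (1 / 2) * (x - (a + b) / 2) ^ 2 by positivity)]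
    have e2 : |(1 / 2) * ((x - (a + b) / 2) + (y - (a + b) / 2)) * (x - y) * f y|
        ≤ (1 / 2) * ((b - a) * |x - y| * M) := by
      rw [abs_mul, abs_mul, abs_mul]
      have t1 : |(1:ℝ) / 2| * |(x - (a + b) / 2) + (y - (a + b) / 2)| ≤ (1 / 2) * (b - a) := by
        rw [abs_of_nonneg (by norm_num : (0:ℝ) ≤ 1/2)]
        linarith [hsum]
      have t2 : |(1:ℝ) / 2| * |(x - (a + b) / 2) + (y - (a + b) / 2)| * |x - y|
          ≤ (1 / 2) * (b - a) * |x - y| := mul_le_mul_of_nonneg_right t1 (abs_nonneg _)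
      calc |(1:ℝ) / 2| * |(x - (a + b) / 2) + (y - (a + b) / 2)| * |x - y| * |f y|
          ≤ (1 / 2) * (b - a) * |x - y| * M := by
            apply mul_le_mul t2 hfy (abs_nonneg _)
            have : (0:ℝ) ≤ |x - y| := abs_nonneg _
            nlinarith
        _ = (1 / 2) * ((b - a) * |x - y| * M) := by ring
    have t3 : (x - (a + b) / 2) ^ 2 * |f x - f y| ≤ ((b - a) / 2) ^ 2 * (L * |x - y|) :=
      mul_le_mul hx2 hff (abs_nonneg _) (by positivity)
    calc |g x - g y| ≤ |(1 / 2) * (x - (a + b) / 2) ^ 2 * (f x - f y)|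
          + |(1 / 2) * ((x - (a + b) / 2) + (y - (a + b) / 2)) * (x - y) * f y| := by
          rw [hid]; exact abs_add_le _ _
      _ ≤ (1 / 2) * (((b - a) / 2) ^ 2 * (L * |x - y|)) + (1 / 2) * ((b - a) * |x - y| * M) := by
          rw [e1]
          have : (1 / 2) * (x - (a + b) / 2) ^ 2 * |f x - f y|
              ≤ (1 / 2) * (((b - a) / 2) ^ 2 * (L * |x - y|)) := by nlinarith [t3]
          linarith [e2]
      _ = C * |x - y| := by rw [hC_def]; ring
  have hW : ∫ y in a..b, deriv g y = g b - g a := lipOn_ftc hab.le hgLip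
  have hmeasD : Measurable (deriv f) := measurable_deriv f
  have hII1 : IntervalIntegrable (fun y => (y - (a + b) / 2) * f y) volume a b :=
    ((continuous_id.sub continuous_const).mul fc).intervalIntegrable a b
  have hII2 : IntervalIntegrable (fun y => (1 / 2) * (y - (a + b) / 2) ^ 2 * deriv f y)
      volume a b := by
    rw [intervalIntegrable_iff_integrableOn_Ioc_of_le hab.le]
    apply MeasureTheory.Integrable.mono' (integrable_const ((1 / 2) * ((b - a) / 2) ^ 2 * L))
    · exact ((measurable_const.mul
        ((measurable_id.sub_const _).pow_const 2)).mul hmeasD).aestronglyMeasurable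
    · rw [MeasureTheory.ae_restrict_iff' measurableSet_Ioc]
      filter_upwards with y hy
      have hym : |y - (a + b) / 2| ≤ (b - a) / 2 := by
        rw [abs_le]; constructor <;> [linarith [hy.1]; linarith [hy.2]]
      have hy2 : (y - (a + b) / 2) ^ 2 ≤ ((b - a) / 2) ^ 2 := by
        rw [← sq_abs]; exact pow_le_pow_left₀ (abs_nonneg _) hym 2
      rw [Real.norm_eq_abs, abs_mul,
        abs_of_nonneg (show (0:ℝ) ≤ (1 / 2) * (y - (a + b) / 2) ^ 2 by positivity)]
      calc (1 / 2) * (y - (a + b) / 2) ^ 2 * |deriv f y|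
          ≤ (1 / 2) * (y - (a + b) / 2) ^ 2 * L :=
            mul_le_mul_of_nonneg_left (hDb y) (by positivity)
        _ ≤ (1 / 2) * ((b - a) / 2) ^ 2 * L := by nlinarith [hL.le]
  have hcongr : ∫ y in a..b, deriv g y
      = ∫ y in a..b, ((y - (a + b) / 2) * f y
        + (1 / 2) * (y - (a + b) / 2) ^ 2 * deriv f y) := by
    apply intervalIntegral.integral_congr_ae
    filter_upwards [hlipf.ae_differentiableAt_of_real] with y hy _
    have h0 : HasDerivAt (fun z : ℝ => z - (a + b) / 2) 1 y := (hasDerivAt_id y).sub_const _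
    have h1 : HasDerivAt (fun z => (1 / 2) * (z - (a + b) / 2) ^ 2) (y - (a + b) / 2) y := by
      have := (h0.fun_pow 2).const_mul ((1:ℝ) / 2)
      refine this.congr_deriv ?_
      push_cast; ring
    have h2 := h1.mul hy.hasDerivAt
    exact h2.deriv
  have hsplit : ∫ y in a..b, ((y - (a + b) / 2) * f y
        + (1 / 2) * (y - (a + b) / 2) ^ 2 * deriv f y)
      = (∫ y in a..b, (y - (a + b) / 2) * f y)
        + ∫ y in a..b, (1 / 2) * (y - (a + b) / 2) ^ 2 * deriv f y :=
    intervalIntegral.integral_add hII1 hII2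
  have hlin : ∫ y in a..b, (y - (a + b) / 2) * f y = q * ybar - (a + b) / 2 * q := by
    have ha1 : IntervalIntegrable (fun y : ℝ => y * f y) volume a b :=
      (continuous_id.mul fc).intervalIntegrable a b
    have ha2 : IntervalIntegrable (fun y : ℝ => (a + b) / 2 * f y) volume a b :=
      (continuous_const.mul fc).intervalIntegrable a b
    have e : ∫ y in a..b, (y - (a + b) / 2) * f y
        = (∫ y in a..b, y * f y) - ∫ y in a..b, (a + b) / 2 * f y := by
      rw [← intervalIntegral.integral_sub ha1 ha2]
      apply intervalIntegral.integral_congr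
      intro y _
      ring
    rw [e, intervalIntegral.integral_const_mul, ← hybar, ← hq]
  have hend : g b - g a = (1 / 8) * (b - a) ^ 2 * (f b - f a) := by
    rw [hg_def]; ring
  have hkey : (q * ybar - (a + b) / 2 * q)
      + (∫ y in a..b, (1 / 2) * (y - (a + b) / 2) ^ 2 * deriv f y)
      = (1 / 8) * (b - a) ^ 2 * (f b - f a) := by
    rw [← hlin, ← hsplit, ← hcongr, hW, hend]
  constructor
  · linear_combination hkey
  · have part1 : q * (ybar - (a + b) / 2) =
        (1 / 8) * (b - a) ^ 2 * (f b - f a) -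
          ∫ y in a..b, (1 / 2) * (y - (a + b) / 2) ^ 2 * deriv f y := by
      linear_combination hkey
    rw [show q * |ybar - (a + b) / 2| = |q * (ybar - (a + b) / 2)| by
      rw [abs_mul, abs_of_pos hq0], part1]
    set I : ℝ := ∫ y in a..b, (1 / 2) * (y - (a + b) / 2) ^ 2 * deriv f y with hI_def
    have h1 : |f b - f a| ≤ L * (b - a) := by
      have := hLip b a
      rwa [abs_of_pos hba] at this
    have hIb : |I| ≤ L * (b - a) ^ 3 / 24 := by
      have hle : |I| ≤ |∫ y in a..b, L / 2 * (y - (a + b) / 2) ^ 2| := by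
        rw [← Real.norm_eq_abs, hI_def]
        apply intervalIntegral.norm_integral_le_abs_of_norm_le
        · filter_upwards with y
          rw [Real.norm_eq_abs, abs_mul,
            abs_of_nonneg (show (0:ℝ) ≤ (1 / 2) * (y - (a + b) / 2) ^ 2 by positivity)]
          nlinarith [hDb y, sq_nonneg (y - (a + b) / 2), abs_nonneg (deriv f y)]
        · exact (continuous_const.mul
            ((continuous_id.sub continuous_const).pow 2)).intervalIntegrable a b
      have hcomp : ∫ y in a..b, L / 2 * (y - (a + b) / 2) ^ 2 = L * (b - a) ^ 3 / 24 := by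
        rw [intervalIntegral.integral_const_mul]
        have e := intervalIntegral.integral_comp_sub_right (a := a) (b := b)
          (fun y => y ^ 2) ((a + b) / 2)
        rw [e, integral_pow]
        push_cast; ring
      rw [hcomp] at hle
      have : |L * (b - a) ^ 3 / 24| = L * (b - a) ^ 3 / 24 := by
        apply abs_of_nonneg
        have : (0:ℝ) ≤ (b - a) ^ 3 := by positivity
        nlinarith [hL.le]
      linarith [hle, this.le, this.ge]
    have habs1 : |(1 / 8) * (b - a) ^ 2 * (f b - f a)|
        = (1 / 8) * (b - a) ^ 2 * |f b - f a| := by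
      rw [abs_mul, abs_of_nonneg (show (0:ℝ) ≤ (1 / 8) * (b - a) ^ 2 by positivity)]
    calc |(1 / 8) * (b - a) ^ 2 * (f b - f a) - I|
        ≤ |(1 / 8) * (b - a) ^ 2 * (f b - f a)| + |I| := by
          rw [sub_eq_add_neg]
          exact (abs_add_le _ _).trans_eq (by rw [abs_neg])
      _ ≤ L / 6 * (b - a) ^ 3 := by
          rw [habs1]
          nlinarith [mul_le_mul_of_nonneg_left h1
            (show (0:ℝ) ≤ (1 / 8) * (b - a) ^ 2 by positivity), hIb]
end

section
/- For the double Pareto distribution with α > 1, β > 0, M = 1, the Lorenz curve is L(x) = (α−1)(α+β)^{1/β} α^{−1−1/β} x^{1+1/β} for 0 ≤ x ≤ α/(α+β), and L(x) = 1 − (β+1)(α+β)^{−1/α} β^{−1+1/α}(1−x)^{1−1/α} for α/(α+β) ≤ x ≤ 1. -/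
open MeasureTheory Set Real

private lemma dp_eqon1 (α β : ℝ) (hβ : 0 < β) {y : ℝ} (hy0 : 0 ≤ y) (hy1 : y ≤ 1) :
    EqOn (fun t : ℝ => t * (if t ≤ 1 then α * β / (α + β) * t ^ (β - 1)
      else α * β / (α + β) * t ^ (-α - 1))) (fun t : ℝ => α * β / (α + β) * t ^ β)
      (uIcc 0 y) := by
  intro t ht
  rw [uIcc_of_le hy0] at ht
  have ht1 : t ≤ 1 := ht.2.trans hy1
  simp only [if_pos ht1]
  rcases eq_or_lt_of_le ht.1 with h | h
  · simp [← h, Real.zero_rpow hβ.ne']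
  · have : t * t ^ (β - 1) = t ^ β := by
      nth_rw 1 [← Real.rpow_one t]
      rw [← Real.rpow_add h]; ring_nf
    rw [show t * (α * β / (α + β) * t ^ (β - 1)) = α * β / (α + β) * (t * t ^ (β - 1)) by ring,
      this]

private lemma dp_int1 (α β : ℝ) (hβ : 0 < β) {y : ℝ} (hy0 : 0 ≤ y) (hy1 : y ≤ 1) :
    (∫ t in (0:ℝ)..y, t * (if t ≤ 1 then α * β / (α + β) * t ^ (β - 1)
      else α * β / (α + β) * t ^ (-α - 1)))
      = α * β / (α + β) * (y ^ (β + 1) / (β + 1)) := by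
  rw [intervalIntegral.integral_congr (dp_eqon1 α β hβ hy0 hy1),
    intervalIntegral.integral_const_mul, integral_rpow (Or.inl (by linarith))]
  rw [Real.zero_rpow (by positivity)]
  ring

private lemma dp_eqon2 (α β : ℝ) {y : ℝ} (hy : 1 ≤ y) :
    EqOn (fun t : ℝ => t * (if t ≤ 1 then α * β / (α + β) * t ^ (β - 1)
      else α * β / (α + β) * t ^ (-α - 1))) (fun t : ℝ => α * β / (α + β) * t ^ (-α))
      (uIcc 1 y) := by
  intro t ht
  rw [uIcc_of_le hy] at ht
  have ht1 : (1:ℝ) ≤ t := ht.1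
  have ht0 : (0:ℝ) < t := by linarith
  have key : t * t ^ (-α - 1) = t ^ (-α) := by
    nth_rw 1 [← Real.rpow_one t]
    rw [← Real.rpow_add ht0]; ring_nf
  rcases eq_or_lt_of_le ht1 with h | h
  · simp [← h]
  · simp only [if_neg (not_le.2 h)]
    rw [show t * (α * β / (α + β) * t ^ (-α - 1)) = α * β / (α + β) * (t * t ^ (-α - 1)) by ring,
      key]

private lemma dp_int2 (α β : ℝ) (hα : 1 < α) {y : ℝ} (hy : 1 ≤ y) :
    (∫ t in (1:ℝ)..y, t * (if t ≤ 1 then α * β / (α + β) * t ^ (β - 1)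
      else α * β / (α + β) * t ^ (-α - 1)))
      = α * β / (α + β) * ((y ^ (1 - α) - 1) / (1 - α)) := by
  rw [intervalIntegral.integral_congr (dp_eqon2 α β hy),
    intervalIntegral.integral_const_mul,
    integral_rpow (Or.inr ⟨by intro h; apply hα.ne'; linarith, by
      rw [uIcc_of_le hy]; intro h; exact absurd h.1 (by norm_num)⟩)]
  rw [Real.one_rpow]
  ring_nf

private lemma dp_integrable1 (α β : ℝ) (hβ : 0 < β) :
    IntervalIntegrable (fun t : ℝ => t * (if t ≤ 1 then α * β / (α + β) * t ^ (β - 1)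
      else α * β / (α + β) * t ^ (-α - 1))) volume 0 1 := by
  refine ((intervalIntegral.intervalIntegrable_rpow' (by linarith : (-1:ℝ) < β)).const_mul
    (α * β / (α + β))).congr ?_
  exact id
    (fun t ht => ((dp_eqon1 α β hβ zero_le_one le_rfl) (uIoc_subset_uIcc ht)).symm)

private lemma dp_integrable2 (α β : ℝ) (hα : 1 < α) {y : ℝ} (hy : 1 ≤ y) :
    IntervalIntegrable (fun t : ℝ => t * (if t ≤ 1 then α * β / (α + β) * t ^ (β - 1)
      else α * β / (α + β) * t ^ (-α - 1))) volume 1 y := by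
  refine ((intervalIntegral.intervalIntegrable_rpow (r := -α) (Or.inr ?_)).const_mul
    (α * β / (α + β))).congr ?_
  · rw [uIcc_of_le hy]; intro h; exact absurd h.1 (by norm_num)
  · exact id
      (fun t ht => ((dp_eqon2 α β hy) (uIoc_subset_uIcc ht)).symm)

/-- Lorenz curve of the double Pareto distribution (α > 1, β > 0, M = 1):
with L(F(y)) = (1/μ)∫₀^y t f(t) dt and μ = αβ/((α−1)(β+1)),
L(x) = (α−1)(α+β)^{1/β} α^{−1−1/β} x^{1+1/β} for x = F(y) ≤ α/(α+β) (y ≤ 1), and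
L(x) = 1 − (β+1)(α+β)^{−1/α} β^{−1+1/α}(1−x)^{1−1/α} for x = F(y) ≥ α/(α+β) (y ≥ 1). -/
theorem doublePareto_lorenz
    (α β μ : ℝ) (hα : 1 < α) (hβ : 0 < β)
    (hμ : μ = α * β / ((α - 1) * (β + 1)))
    (f F : ℝ → ℝ)
    (hf : f = fun y : ℝ =>
      if y ≤ 1 then α * β / (α + β) * y ^ (β - 1)
      else α * β / (α + β) * y ^ (-α - 1))
    (hF : F = fun y : ℝ =>
      if y ≤ 1 then α / (α + β) * y ^ β
      else 1 - β / (α + β) * y ^ (-α)) :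
    (∀ y : ℝ, 0 ≤ y → y ≤ 1 →
      (∫ t in (0:ℝ)..y, t * f t) / μ =
        (α - 1) * (α + β) ^ (1 / β) * α ^ (-1 - 1 / β) * (F y) ^ (1 + 1 / β)) ∧
    (∀ y : ℝ, 1 ≤ y →
      (∫ t in (0:ℝ)..y, t * f t) / μ =
        1 - (β + 1) * (α + β) ^ (-1 / α) * β ^ (-1 + 1 / α) * (1 - F y) ^ (1 - 1 / α)) := by
  have hα0 : (0:ℝ) < α := by linarith
  have hab : (0:ℝ) < α + β := by linarith
  subst hf hF
  constructor
  · intro y hy0 hy1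
    rw [dp_int1 α β hβ hy0 hy1, hμ]
    simp only [if_pos hy1]
    have ey : (y ^ β) ^ (1 + 1 / β) = y ^ (β + 1) := by
      rw [← Real.rpow_mul hy0, show β * (1 + 1 / β) = β + 1 by field_simp]
    rw [Real.mul_rpow (by positivity) (Real.rpow_nonneg hy0 β),
      Real.div_rpow hα0.le hab.le, ey,
      show α ^ (-1 - 1/β) = (α * α ^ (1/β))⁻¹ by
        rw [show (-1 - 1/β) = -(1 + 1/β) by ring, Real.rpow_neg hα0.le,
          Real.rpow_add hα0, Real.rpow_one],
      show α ^ (1 + 1/β) = α * α ^ (1/β) by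
        rw [Real.rpow_add hα0, Real.rpow_one],
      show (α + β) ^ (1 + 1/β) = (α + β) * (α + β) ^ (1/β) by
        rw [Real.rpow_add hab, Real.rpow_one]]
    have hP : (0:ℝ) < α ^ (1/β) := Real.rpow_pos_of_pos hα0 _
    have hQ : (0:ℝ) < (α + β) ^ (1/β) := Real.rpow_pos_of_pos hab _
    field_simp
  · intro y hy
    have hy0 : (0:ℝ) < y := by linarith
    rw [← intervalIntegral.integral_add_adjacent_intervals
      (dp_integrable1 α β hβ) (dp_integrable2 α β hα hy),
      dp_int1 α β hβ zero_le_one le_rfl, dp_int2 α β hα hy, hμ]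
    rw [Real.one_rpow]
    have h1F : (1 : ℝ) - (if y ≤ 1 then α / (α + β) * y ^ β else 1 - β / (α + β) * y ^ (-α))
        = β / (α + β) * y ^ (-α) := by
      rcases eq_or_lt_of_le hy with h | h
      · rw [← h, if_pos le_rfl, Real.one_rpow, Real.one_rpow]
        field_simp
        ring
      · rw [if_neg (not_le.2 h)]; ring
    simp only []
    rw [h1F]
    have ey : (y ^ (-α)) ^ (1 - 1 / α) = y ^ (1 - α) := by
      rw [← Real.rpow_mul hy0.le, show -α * (1 - 1 / α) = 1 - α by field_simp; ring]
    rw [Real.mul_rpow (by positivity) (Real.rpow_nonneg hy0.le _),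
      Real.div_rpow hβ.le hab.le, ey]
    have e1 : β ^ (-1 + 1/α) * β ^ (1 - 1/α) = 1 := by
      rw [← Real.rpow_add hβ]; norm_num
    have e2 : (α + β) ^ (-1/α) / (α + β) ^ (1 - 1/α) = (α + β)⁻¹ := by
      rw [← Real.rpow_sub hab, show -1/α - (1 - 1/α) = -1 by ring, Real.rpow_neg_one]
    have key : (β + 1) * (α + β) ^ (-1/α) * β ^ (-1 + 1/α) *
        (β ^ (1 - 1/α) / (α + β) ^ (1 - 1/α) * y ^ (1 - α))
        = (β + 1) * (α + β)⁻¹ * y ^ (1 - α) := by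
      calc (β + 1) * (α + β) ^ (-1/α) * β ^ (-1 + 1/α) *
          (β ^ (1 - 1/α) / (α + β) ^ (1 - 1/α) * y ^ (1 - α))
          = (β + 1) * (β ^ (-1 + 1/α) * β ^ (1 - 1/α)) *
            ((α + β) ^ (-1/α) / (α + β) ^ (1 - 1/α)) * y ^ (1 - α) := by ring
        _ = (β + 1) * (α + β)⁻¹ * y ^ (1 - α) := by rw [e1, e2]; ring
    rw [key]
    have h1a : (1:ℝ) - α ≠ 0 := by intro h; apply hα.ne'; linarith
    have ha1 : α - 1 ≠ 0 := by intro h; apply hα.ne'; linarith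
    have hb1 : β + 1 ≠ 0 := by positivity
    field_simp
    ring
end
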